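/- arXiv:1111.2090 — 6 statements merged into one kernel-verified Lean document; each statement's English description precedes it below -/
import Mathlib

section
/- Let R be a right perfect ring. Then the following are equivalent: (1) R has no right p-middle class; (2) every quasi-projective right R-module that is not semisimple is projective; (3) every two-sided ideal of R contained in J(R) equals 0 or J(R). -/
universe u

/-- `M` is `N`-projective. -/
def ModProj (A : Type u) [Ring A] (M : Type u) [AddCommGroup M] [Module A M]
    (N : Type u) [AddCommGroup N] [Module A N] : Prop :=
  ∀ (K : Type u) [AddCommGroup K] [Module A K] (g : N →ₗ[A] K),
    Function.Surjective g → ∀ f : M →ₗ[A] K, ∃ h : M →ₗ[A] N, ∀ x : M, g (h x) = f x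

/-- A submodule `K ≤ P` is superfluous. -/
def Superfluous (A : Type u) [Ring A] {P : Type u} [AddCommGroup P] [Module A P]
    (K : Submodule A P) : Prop :=
  ∀ L : Submodule A P, K ⊔ L = ⊤ → L = ⊤

/-- `R` is right perfect: every right `R`-module has a projective cover. -/
def RightPerfect (R : Type u) [Ring R] : Prop :=
  ∀ (M : Type u) [AddCommGroup M] [Module Rᵐᵒᵖ M],
    ∃ (P : ModuleCat.{u} Rᵐᵒᵖ) (p : P →ₗ[Rᵐᵒᵖ] M),
      (∀ (N : Type u) [AddCommGroup N] [Module Rᵐᵒᵖ N], ModProj Rᵐᵒᵖ P N) ∧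
      Function.Surjective p ∧ Superfluous Rᵐᵒᵖ (LinearMap.ker p)

/-- `R` has no right p-middle class: every right `R`-module is projective or its
projectivity domain consists precisely of the semisimple modules. -/
def NoRightPMiddleClass (R : Type u) [Ring R] : Prop :=
  ∀ (M : Type u) [AddCommGroup M] [Module Rᵐᵒᵖ M],
    (∀ (N : Type u) [AddCommGroup N] [Module Rᵐᵒᵖ N], ModProj Rᵐᵒᵖ M N) ∨
    (∀ (N : Type u) [AddCommGroup N] [Module Rᵐᵒᵖ N],
      ModProj Rᵐᵒᵖ M N ↔ IsSemisimpleModule Rᵐᵒᵖ N)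

/-- A right ideal of `R` is two-sided. -/
def IsTwoSidedRI (R : Type u) [Ring R] (I : Ideal Rᵐᵒᵖ) : Prop :=
  ∀ x ∈ I, ∀ r : R, x * MulOpposite.op r ∈ I

section Aux

variable {A : Type u} [Ring A]

theorem jac_mul_mem {x : A} (hx : x ∈ (⊥ : Ideal A).jacobson) (a : A) :
    x * a ∈ (⊥ : Ideal A).jacobson :=
  (⊥ : Ideal A).jacobson.mul_mem_right a hx

theorem jac_left_inv {x : A} (hx : x ∈ (⊥ : Ideal A).jacobson) :
    ∃ z : A, z * (1 - x) = 1 := by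
  obtain ⟨z, hz⟩ := Ideal.mem_jacobson_iff.mp hx (-1)
  rw [Ideal.mem_bot, sub_eq_zero] at hz
  refine ⟨z, ?_⟩
  calc z * (1 - x) = z * -1 * x + z := by noncomm_ring
  _ = 1 := hz

theorem jac_unit {x : A} (hx : x ∈ (⊥ : Ideal A).jacobson) :
    ∃ z : A, z * (1 - x) = 1 ∧ (1 - x) * z = 1 := by
  obtain ⟨z, hz⟩ := jac_left_inv hx
  have hz' : z - z * x = 1 := by rw [← mul_one_sub]; exact hz
  have hzx : z = 1 + z * x := eq_add_of_sub_eq hz'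
  have h2 : -(z * x) ∈ (⊥ : Ideal A).jacobson := neg_mem (Ideal.mul_mem_left _ z hx)
  obtain ⟨w, hw⟩ := jac_left_inv h2
  have hzz : (1 : A) - -(z * x) = z := by rw [sub_neg_eq_add]; exact hzx.symm
  rw [hzz] at hw
  have hwinv : w = 1 - x := by
    calc w = w * (z * (1 - x)) := by rw [hz, mul_one]
    _ = w * z * (1 - x) := by rw [mul_assoc]
    _ = 1 - x := by rw [hw, one_mul]
  exact ⟨z, hz, by rw [← hwinv]; exact hw⟩

theorem nak_fin : ∀ (n : ℕ) (c : Fin n → A) (b : Fin n → Fin n → A),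
    (∀ i k, b i k ∈ (⊥ : Ideal A).jacobson) →
    (∀ i, c i = ∑ k, c k * b i k) → ∀ i, c i = 0 := by
  intro n
  induction n with
  | zero => intro c b _ _ i; exact i.elim0
  | succ n ih =>
    intro c b hb hc
    set l := Fin.last n with hl
    obtain ⟨z, hz1, hz2⟩ := jac_unit (hb l l)
    have h1 : c l = ∑ k : Fin n, c k.castSucc * b l k.castSucc + c l * b l l := by
      conv_lhs => rw [hc l]
      exact Fin.sum_univ_castSucc fun k => c k * b l k
    have h2 : c l * (1 - b l l) = ∑ k : Fin n, c k.castSucc * b l k.castSucc := by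
      rw [mul_one_sub, sub_eq_iff_eq_add]
      exact h1
    have key : c l = (∑ k : Fin n, c k.castSucc * b l k.castSucc) * z := by
      calc c l = c l * ((1 - b l l) * z) := by rw [hz2, mul_one]
      _ = c l * (1 - b l l) * z := by rw [mul_assoc]
      _ = _ := by rw [h2]
    have hrel : ∀ i : Fin n, c i.castSucc = ∑ k : Fin n,
        c k.castSucc * (b i.castSucc k.castSucc + b l k.castSucc * (z * b i.castSucc l)) := by
      intro i
      calc c i.castSucc
          = ∑ k : Fin n, c k.castSucc * b i.castSucc k.castSucc + c l * b i.castSucc l := by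
            conv_lhs => rw [hc i.castSucc]
            exact Fin.sum_univ_castSucc fun k => c k * b i.castSucc k
      _ = ∑ k : Fin n, c k.castSucc * b i.castSucc k.castSucc
            + (∑ k : Fin n, c k.castSucc * b l k.castSucc) * z * b i.castSucc l := by rw [key]
      _ = ∑ k : Fin n, (c k.castSucc * b i.castSucc k.castSucc
            + c k.castSucc * (b l k.castSucc * (z * b i.castSucc l))) := by
            rw [Finset.sum_add_distrib, Finset.sum_mul, Finset.sum_mul]
            congr 1
            refine Finset.sum_congr rfl fun k _ => ?_
            noncomm_ring
      _ = _ := by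
            refine Finset.sum_congr rfl fun k _ => ?_
            rw [mul_add]
    have hzero := ih (fun k => c k.castSucc)
      (fun i k => b i.castSucc k.castSucc + b l k.castSucc * (z * b i.castSucc l))
      (fun i k => Ideal.add_mem _ (hb _ _) (jac_mul_mem (hb l k.castSucc) _))
      hrel
    have hzero' : ∀ k : Fin n, c k.castSucc = 0 := hzero
    intro i
    refine Fin.lastCases ?_ (fun k => hzero' k) i
    rw [key]
    have hterm : ∀ k : Fin n, c k.castSucc * b l k.castSucc = 0 := fun k => by
      rw [hzero' k, zero_mul]
    rw [Finset.sum_congr rfl fun k _ => hterm k, Finset.sum_const_zero, zero_mul]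

theorem jac_smul_top_le :
    ((⊥ : Ideal A).jacobson • (⊤ : Submodule A A)) ≤ (⊥ : Ideal A).jacobson :=
  Submodule.smul_le.mpr fun j hj a _ => by rw [smul_eq_mul]; exact jac_mul_mem hj a

theorem coordJ {ι : Type u} {v : ι →₀ A}
    (hv : v ∈ ((⊥ : Ideal A).jacobson • ⊤ : Submodule A (ι →₀ A))) (i : ι) :
    v i ∈ (⊥ : Ideal A).jacobson := by
  have h1 : v i ∈ ((⊥ : Ideal A).jacobson • ⊤ : Submodule A (ι →₀ A)).map (Finsupp.lapply i) :=
    ⟨v, hv, rfl⟩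
  rw [Submodule.map_smul''] at h1
  exact jac_smul_top_le (Submodule.smul_mono le_rfl le_top h1)

theorem factorThru {X Y W : Type u} [AddCommGroup X] [Module A X] [AddCommGroup Y] [Module A Y]
    [AddCommGroup W] [Module A W] (p : X →ₗ[A] Y) (hp : Function.Surjective p)
    (φ : X →ₗ[A] W) (hker : LinearMap.ker p ≤ LinearMap.ker φ) :
    ∃ ψ : Y →ₗ[A] W, ∀ x, ψ (p x) = φ x := by
  choose σ hσ using hp
  have hcongr : ∀ x y : X, p x = p y → φ x = φ y := fun x y h => by
    have h1 : x - y ∈ LinearMap.ker p := by rw [LinearMap.mem_ker, map_sub, h, sub_self]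
    have h2 := hker h1
    rw [LinearMap.mem_ker, map_sub, sub_eq_zero] at h2
    exact h2
  refine ⟨{ toFun := fun y => φ (σ y), map_add' := ?_, map_smul' := ?_ }, ?_⟩
  · intro a b
    rw [← map_add]
    exact hcongr _ _ (by rw [map_add, hσ, hσ, hσ])
  · intro a b
    simp only [RingHom.id_apply]
    rw [← map_smul]
    exact hcongr _ _ (by rw [map_smul, hσ, hσ])
  · intro x
    exact hcongr _ _ (hσ _)

theorem modProj_equiv {M M' N : Type u} [AddCommGroup M] [Module A M] [AddCommGroup M']
    [Module A M'] [AddCommGroup N] [Module A N] (h : ModProj A M N) (e : M ≃ₗ[A] M') :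
    ModProj A M' N := by
  intro K _ _ g hg f
  obtain ⟨h₀, hh₀⟩ := h K g hg (f ∘ₗ (e : M →ₗ[A] M'))
  refine ⟨h₀ ∘ₗ (e.symm : M' →ₗ[A] M), fun x => ?_⟩
  have := hh₀ (e.symm x)
  simpa using this

theorem modProj_finsupp (ι : Type u) (N : Type u) [AddCommGroup N] [Module A N] :
    ModProj A (ι →₀ A) N := by
  intro K _ _ g hg f
  have : ∀ i : ι, ∃ y : N, g y = f (Finsupp.single i 1) := fun i => hg _
  choose c hc using this
  refine ⟨Finsupp.linearCombination A c, fun x => ?_⟩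
  induction x using Finsupp.induction_linear with
  | zero => simp
  | add a b ha hb => rw [map_add, map_add, map_add, ha, hb]
  | single i a =>
    rw [Finsupp.linearCombination_single]
    have h1 : Finsupp.single i a = a • Finsupp.single i (1 : A) := by
      rw [Finsupp.smul_single, smul_eq_mul, mul_one]
    rw [map_smul, hc i, ← map_smul, ← h1]

theorem modProj_of_ss {M N : Type u} [AddCommGroup M] [Module A M] [AddCommGroup N] [Module A N]
    (hN : IsSemisimpleModule A N) : ModProj A M N := by
  intro K _ _ g hg f
  haveI := hN
  obtain ⟨W, hW⟩ := exists_isCompl (LinearMap.ker g)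
  have hbij : Function.Bijective (g ∘ₗ W.subtype) := by
    constructor
    · intro x y hxy
      have h1 : (↑x - ↑y : N) ∈ LinearMap.ker g := by
        rw [LinearMap.mem_ker, map_sub]
        rw [sub_eq_zero]
        simpa using hxy
      have h2 : (↑x - ↑y : N) ∈ W := sub_mem x.2 y.2
      have h3 : (↑x - ↑y : N) = 0 := by
        have := hW.disjoint
        rw [Submodule.disjoint_def] at this
        exact this _ h1 h2
      exact Subtype.ext (by rwa [sub_eq_zero] at h3)
    · intro k
      obtain ⟨n, rfl⟩ := hg k
      have : n ∈ LinearMap.ker g ⊔ W := by rw [hW.sup_eq_top]; trivial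
      obtain ⟨v, hv, w, hw, rfl⟩ := Submodule.mem_sup.mp this
      exact ⟨⟨w, hw⟩, by simp [LinearMap.mem_ker.mp hv]⟩
  set e := LinearEquiv.ofBijective _ hbij with he
  refine ⟨W.subtype ∘ₗ (e.symm : K →ₗ[A] W) ∘ₗ f, fun x => ?_⟩
  have h4 : ∀ y : K, g ((W.subtype) (e.symm y)) = y := fun y => by
    have := e.apply_symm_apply y
    rwa [he, LinearEquiv.ofBijective_apply] at this
  simpa using h4 (f x)

theorem small_of_le_jac {I L : Ideal A} (hI : I ≤ (⊥ : Ideal A).jacobson)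
    (h : I ⊔ L = ⊤) : L = ⊤ := by
  by_contra hL
  obtain ⟨m, hm, hLm⟩ := Ideal.exists_le_maximal L hL
  have hIm : I ≤ m := hI.trans (sInf_le ⟨bot_le, hm⟩)
  exact hm.ne_top (top_le_iff.mp (h ▸ sup_le hIm hLm))

theorem jkills_simple {X : Type u} [AddCommGroup X] [Module A X] (S : Submodule A X)
    (hS : IsSimpleModule A ↥S) {j : A} (hj : j ∈ (⊥ : Ideal A).jacobson)
    (y : X) (hy : y ∈ S) : j • y = 0 := by
  haveI := hS
  by_cases h0 : y = 0
  · rw [h0, smul_zero]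
  have hm : (⟨y, hy⟩ : ↥S) ≠ 0 := fun h => h0 (by simpa using congrArg S.subtype h)
  have hmax := IsSimpleModule.ker_toSpanSingleton_isMaximal A hm
  have hle : (⊥ : Ideal A).jacobson ≤ LinearMap.ker (LinearMap.toSpanSingleton A ↥S ⟨y, hy⟩) := by
    unfold Ideal.jacobson
    exact sInf_le ⟨bot_le, hmax⟩
  have hjk := hle hj
  rw [LinearMap.mem_ker, LinearMap.toSpanSingleton_apply] at hjk
  have := congrArg S.subtype hjk
  simpa using this

theorem jkills {X : Type u} [AddCommGroup X] [Module A X] (hss : IsSemisimpleModule A X)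
    {j : A} (hj : j ∈ (⊥ : Ideal A).jacobson) (x : X) : j • x = 0 := by
  haveI := hss
  have hx : x ∈ sSup {m : Submodule A X | IsSimpleModule A m} := by
    rw [IsSemisimpleModule.sSup_simples_eq_top]; trivial
  rw [sSup_eq_iSup'] at hx
  refine Submodule.iSup_induction (motive := fun y => j • y = 0) _ hx ?_ (by simp) ?_
  · rintro ⟨S, hS⟩ y hy
    exact jkills_simple S hS hj y hy
  · intro y z hy hz
    rw [smul_add, hy, hz, add_zero]

theorem ss_of_surj {X Y : Type u} [AddCommGroup X] [Module A X] [AddCommGroup Y] [Module A Y]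
    (hX : IsSemisimpleModule A X) (f : X →ₗ[A] Y) (hf : Function.Surjective f) :
    IsSemisimpleModule A Y := by
  haveI := hX
  exact IsSemisimpleModule.congr (f.quotKerEquivOfSurjective hf).symm

theorem ss_of_J_ann {X : Type u} [AddCommGroup X] [Module A X]
    (hq : IsSemisimpleModule A (A ⧸ (⊥ : Ideal A).jacobson))
    (hann : ∀ j ∈ (⊥ : Ideal A).jacobson, ∀ x : X, j • x = 0) : IsSemisimpleModule A X := by
  have key : ∀ n : X, ∃ fn : (A ⧸ (⊥ : Ideal A).jacobson) →ₗ[A] X,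
      fn (Submodule.Quotient.mk 1) = n := by
    intro n
    refine ⟨Submodule.liftQ _ (LinearMap.toSpanSingleton A X n) ?_, ?_⟩
    · intro j hj
      rw [LinearMap.mem_ker, LinearMap.toSpanSingleton_apply]
      exact hann j hj n
    · rw [Submodule.liftQ_apply, LinearMap.toSpanSingleton_apply, one_smul]
  choose fn hfn using key
  refine isSemisimpleModule_of_isSemisimpleModule_submodule'
    (p := fun n => LinearMap.range (fn n)) ?_ ?_
  · intro n
    exact ss_of_surj hq (fn n).rangeRestrict (fn n).surjective_rangeRestrict
  · rw [eq_top_iff]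
    intro x _
    have hx : x ∈ LinearMap.range (fn x) := ⟨Submodule.Quotient.mk 1, hfn x⟩
    exact Submodule.mem_iSup_of_mem x hx

theorem bass {Q : Type u} [AddCommGroup Q] [Module A Q]
    (hQ : ∀ (N : Type u) [AddCommGroup N] [Module A N], ModProj A Q N)
    (hJQ : ((⊥ : Ideal A).jacobson • ⊤ : Submodule A Q) = ⊤) : ∀ x : Q, x = 0 := by
  classical
  set J := (⊥ : Ideal A).jacobson with hJ
  -- embed into free module
  set F := (Q →₀ A) with hF
  set τ : F →ₗ[A] Q := Finsupp.linearCombination A id with hτ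
  have hτs : Function.Surjective τ := Finsupp.linearCombination_id_surjective A Q
  obtain ⟨s, hs⟩ := hQ F Q τ hτs LinearMap.id
  simp only [LinearMap.id_coe, id_eq] at hs
  -- hs : ∀ x, τ (s x) = x
  set e : F →ₗ[A] F := s ∘ₗ τ with he
  have hrange : ∀ v : F, e v ∈ (J • ⊤ : Submodule A F) := by
    intro v
    have h1 : τ v ∈ (J • ⊤ : Submodule A Q) := by rw [hJQ]; trivial
    have h2 : s (τ v) ∈ (J • ⊤ : Submodule A Q).map s := ⟨τ v, h1, rfl⟩
    rw [Submodule.map_smul''] at h2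
    exact Submodule.smul_mono le_rfl le_top h2
  intro x
  set w := s x with hw
  have hwe : e w = w := by rw [he, LinearMap.comp_apply, hw, hs]
  -- coordinate relation
  have hcoord : ∀ i : Q, w i = ∑ k ∈ w.support, w k * (e (Finsupp.single k 1)) i := by
    intro i
    conv_lhs => rw [← hwe]
    have hdec : w = ∑ k ∈ w.support, (w k) • Finsupp.single k (1 : A) := by
      conv_lhs => rw [← Finsupp.sum_single w]
      rw [Finsupp.sum]
      refine Finset.sum_congr rfl fun k _ => ?_
      rw [Finsupp.smul_single, smul_eq_mul, mul_one]
    calc (e w) i = (∑ k ∈ w.support, (w k) • e (Finsupp.single k 1)) i := by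
          conv_lhs => rw [hdec]
          rw [map_sum]
          congr 1
          exact Finset.sum_congr rfl fun k _ => by rw [map_smul]
    _ = ∑ k ∈ w.support, ((w k) • e (Finsupp.single k 1)) i := by
          rw [Finsupp.finset_sum_apply]
    _ = _ := by
          refine Finset.sum_congr rfl fun k _ => ?_
          rw [Finsupp.smul_apply, smul_eq_mul]
  -- reindex over Fin n
  set n := w.support.card with hn
  set eqv := w.support.equivFin with heqv
  set idx : Fin n → Q := fun i => ((eqv.symm i : w.support) : Q) with hidx
  have hreindex : ∀ (G : Q → A), ∑ k ∈ w.support, G k = ∑ k : Fin n, G (idx k) := by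
    intro G
    rw [← Finset.sum_attach w.support G]
    exact Fintype.sum_equiv eqv (fun a => G a) (fun i => G (idx i)) (fun a => by
      simp only [hidx, Equiv.symm_apply_apply])
  have hnak := nak_fin n (fun i => w (idx i))
    (fun i k => (e (Finsupp.single (idx k) 1)) (idx i))
    (fun i k => coordJ (hrange _) _)
    (fun i => by
      show w (idx i) = ∑ k : Fin n, w (idx k) * (e (Finsupp.single (idx k) 1)) (idx i)
      rw [hcoord (idx i), hreindex (fun k => w k * (e (Finsupp.single k 1)) (idx i))])
  have hwz : w = 0 := by
    ext i
    by_cases hi : i ∈ w.support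
    · have h2 : w (idx (eqv ⟨i, hi⟩)) = 0 := hnak _
      simp only [hidx, Equiv.symm_apply_apply] at h2
      simpa using h2
    · rw [Finsupp.notMem_support_iff] at hi
      simp [hi]
  have : τ w = x := hs x
  rw [hwz, map_zero] at this
  exact this.symm

section Perfect

variable {R : Type u} [Ring R]

theorem lv (hperf : RightPerfect R) (Z : Type u) [AddCommGroup Z] [Module Rᵐᵒᵖ Z]
    (hJZ : ((⊥ : Ideal Rᵐᵒᵖ).jacobson • ⊤ : Submodule Rᵐᵒᵖ Z) = ⊤) : ∀ z : Z, z = 0 := by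
  obtain ⟨Q, p, hQ, hps, hsm⟩ := hperf Z
  have h1 : LinearMap.ker p ⊔ ((⊥ : Ideal Rᵐᵒᵖ).jacobson • ⊤ : Submodule Rᵐᵒᵖ Q) = ⊤ := by
    rw [eq_top_iff]
    intro q _
    have h2 : p q ∈ Submodule.map p ((⊥ : Ideal Rᵐᵒᵖ).jacobson • ⊤ : Submodule Rᵐᵒᵖ Q) := by
      rw [Submodule.map_smul'', Submodule.map_top, LinearMap.range_eq_top.mpr hps, hJZ]
      trivial
    obtain ⟨q', hq', he⟩ := h2
    have h3 : q - q' ∈ LinearMap.ker p := by rw [LinearMap.mem_ker, map_sub, he, sub_self]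
    have h4 : q = (q - q') + q' := by abel
    rw [h4]
    exact Submodule.add_mem_sup h3 hq'
  have h2 := hsm _ h1
  have h3 := bass hQ h2
  intro z
  obtain ⟨q, rfl⟩ := hps z
  rw [h3 q, map_zero]

theorem lv_sub (hperf : RightPerfect R) {Nt : Type u} [AddCommGroup Nt] [Module Rᵐᵒᵖ Nt]
    (Z : Submodule Rᵐᵒᵖ Nt) (hZ : Z ≤ (⊥ : Ideal Rᵐᵒᵖ).jacobson • Z) : Z = ⊥ := by
  have hZZ : ((⊥ : Ideal Rᵐᵒᵖ).jacobson • Z) = Z := le_antisymm Submodule.smul_le_right hZ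
  have htop : ((⊥ : Ideal Rᵐᵒᵖ).jacobson • ⊤ : Submodule Rᵐᵒᵖ Z) = ⊤ := by
    apply Submodule.map_injective_of_injective Z.injective_subtype
    rw [Submodule.map_smul'', Submodule.map_top, Submodule.range_subtype, hZZ]
  have h0 := lv hperf Z htop
  rw [eq_bot_iff]
  intro x hx
  have := h0 ⟨x, hx⟩
  rw [Submodule.mem_bot]
  exact congrArg Subtype.val this

theorem ss_quot_jac (hperf : RightPerfect R) :
    IsSemisimpleModule Rᵐᵒᵖ (Rᵐᵒᵖ ⧸ (⊥ : Ideal Rᵐᵒᵖ).jacobson) := by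
  set J := (⊥ : Ideal Rᵐᵒᵖ).jacobson with hJdef
  refine @IsSemisimpleModule.mk _ _ _ _ _ ⟨?_⟩
  intro S
  set B : Ideal Rᵐᵒᵖ := S.comap J.mkQ with hBdef
  have hJB : J ≤ B := by
    intro j hj
    show J.mkQ j ∈ S
    have : J.mkQ j = 0 := by
      rw [Submodule.mkQ_apply, Submodule.Quotient.mk_eq_zero]
      exact hj
    rw [this]; exact S.zero_mem
  obtain ⟨P, p, hP, hps, hsm⟩ := hperf (Rᵐᵒᵖ ⧸ B)
  obtain ⟨uu, hu⟩ := hps (Submodule.Quotient.mk 1)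
  set h : Rᵐᵒᵖ →ₗ[Rᵐᵒᵖ] P := LinearMap.toSpanSingleton Rᵐᵒᵖ P uu with hhdef
  have hph : ∀ a : Rᵐᵒᵖ, p (h a) = Submodule.Quotient.mk a := by
    intro a
    rw [hhdef, LinearMap.toSpanSingleton_apply, map_smul, hu, ← Submodule.Quotient.mk_smul,
      smul_eq_mul, mul_one]
  have hhsurj : Function.Surjective h := by
    have hsup : LinearMap.ker p ⊔ LinearMap.range h = ⊤ := by
      rw [eq_top_iff]
      intro q _
      obtain ⟨a, ha⟩ := Submodule.Quotient.mk_surjective B (p q)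
      have h5 : q - h a ∈ LinearMap.ker p := by
        rw [LinearMap.mem_ker, map_sub, hph, ha, sub_self]
      have h6 : q = (q - h a) + h a := by abel
      rw [h6]
      exact Submodule.add_mem_sup h5 ⟨a, rfl⟩
    rw [← LinearMap.range_eq_top]
    exact hsm _ hsup
  obtain ⟨s, hs⟩ := hP Rᵐᵒᵖ P h hhsurj LinearMap.id
  simp only [LinearMap.id_coe, id_eq] at hs
  set C : Ideal Rᵐᵒᵖ := LinearMap.range s with hCdef
  have hCfix : ∀ c ∈ C, s (h c) = c := by
    rintro c ⟨y, rfl⟩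
    rw [hs y]
  have hker_le_B : LinearMap.ker h ≤ B := by
    intro a ha
    rw [LinearMap.mem_ker] at ha
    have := hph a
    rw [ha, map_zero] at this
    exact (Submodule.Quotient.mk_eq_zero B).mp this.symm
  have hsupKC : LinearMap.ker h ⊔ C = ⊤ := by
    rw [eq_top_iff]
    intro a _
    have h5 : a - s (h a) ∈ LinearMap.ker h := by
      rw [LinearMap.mem_ker, map_sub, hs, sub_self]
    have h6 : a = (a - s (h a)) + s (h a) := by abel
    rw [h6]
    exact Submodule.add_mem_sup h5 ⟨h a, rfl⟩
  have hmapB : Submodule.map h B = LinearMap.ker p := by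
    apply le_antisymm
    · rintro y ⟨b, hb, rfl⟩
      rw [LinearMap.mem_ker, hph]
      exact (Submodule.Quotient.mk_eq_zero B).mpr hb
    · intro k hk
      refine ⟨s k, ?_, hs k⟩
      show s k ∈ B
      have h7 : p k = 0 := hk
      have h8 : Submodule.Quotient.mk (s k) = (0 : Rᵐᵒᵖ ⧸ B) := by
        rw [← hph (s k), hs k]
        exact h7
      exact (Submodule.Quotient.mk_eq_zero B).mp h8
  have hBC_C_small : ∀ L : Ideal Rᵐᵒᵖ, L ≤ C → (B ⊓ C) ⊔ L = C → L = C := by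
    intro L hLC hsupL
    have hmap : Submodule.map h (B ⊓ C) ⊔ Submodule.map h L = Submodule.map h C := by
      rw [← Submodule.map_sup, hsupL]
    have hCtop : Submodule.map h C = ⊤ := by
      rw [eq_top_iff]
      intro q _
      exact ⟨s q, ⟨q, rfl⟩, hs q⟩
    have hsub : Submodule.map h (B ⊓ C) ≤ LinearMap.ker p := by
      rintro y ⟨b, hb, rfl⟩
      rw [LinearMap.mem_ker, hph]
      exact (Submodule.Quotient.mk_eq_zero B).mpr hb.1
    have hsup2 : LinearMap.ker p ⊔ Submodule.map h L = ⊤ := by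
      rw [eq_top_iff, ← hCtop, ← hmap]
      exact sup_le_sup_right hsub _
    have hLtop := hsm _ hsup2
    refine le_antisymm hLC fun c hc => ?_
    have h9 : h c ∈ Submodule.map h L := by rw [hLtop]; trivial
    obtain ⟨l, hl, hlc⟩ := h9
    have h10 : l = c := by
      rw [← hCfix c hc, ← hCfix l (hLC hl), hlc]
    exact h10 ▸ hl
  have hBCJ : B ⊓ C ≤ J := by
    rw [hJdef]
    unfold Ideal.jacobson
    refine le_sInf fun m hm => ?_
    by_contra hnle
    have hlt : m < m ⊔ (B ⊓ C) := left_lt_sup.mpr hnle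
    have htop : m ⊔ (B ⊓ C) = ⊤ := (Ideal.isMaximal_def.mp hm.2).2 _ hlt
    have hmod : ((B ⊓ C) ⊔ m) ⊓ C = (B ⊓ C) ⊔ (m ⊓ C) := sup_inf_assoc_of_le _ inf_le_right
    rw [sup_comm (B ⊓ C) m, htop, top_inf_eq] at hmod
    have := hBC_C_small (m ⊓ C) inf_le_right hmod.symm
    have hCm : C ≤ m := by
      intro c hc
      have : c ∈ m ⊓ C := by rw [this]; exact hc
      exact this.1
    exact hnle (le_trans inf_le_right hCm)
  have hJtwo : ∀ x ∈ J, ∀ a : Rᵐᵒᵖ, x * a ∈ J := fun x hx a => jac_mul_mem hx a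
  have hshJ : ∀ x ∈ J, s (h x) ∈ J := by
    intro x hx
    have h11 : s (h x) = x * s uu := by
      rw [hhdef, LinearMap.toSpanSingleton_apply, map_smul, smul_eq_mul]
    rw [h11]
    exact hJtwo x hx _
  refine ⟨Submodule.map J.mkQ C, ?_, ?_⟩
  · -- disjoint
    rw [disjoint_iff]
    rw [eq_bot_iff]
    rintro x ⟨hxS, hxC⟩
    obtain ⟨c, hcC, hcx⟩ := hxC
    obtain ⟨b, hbx⟩ := Submodule.Quotient.mk_surjective J x
    have hbB : b ∈ B := by
      show J.mkQ b ∈ S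
      rw [Submodule.mkQ_apply, hbx]
      exact hxS
    have hbc : b - c ∈ J := by
      rw [← Submodule.Quotient.eq J]
      rw [hbx, ← hcx]
      rfl
    set j := b - c with hjdef2
    have h1 : j - s (h j) ∈ J := sub_mem hbc (hshJ j hbc)
    have h2 : b - (j - s (h j)) ∈ B := B.sub_mem hbB (hJB h1)
    have h3 : b - (j - s (h j)) ∈ C := by
      have he : b - (j - s (h j)) = c + s (h j) := by
        rw [hjdef2]; abel
      rw [he]
      exact C.add_mem hcC ⟨h j, rfl⟩
    have h4 : b ∈ J := by
      have h5 : b = (b - (j - s (h j))) + (j - s (h j)) := by abel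
      rw [h5]
      exact J.add_mem (hBCJ ⟨h2, h3⟩) h1
    rw [Submodule.mem_bot, ← hbx, Submodule.Quotient.mk_eq_zero]
    exact h4
  · -- codisjoint
    rw [codisjoint_iff]
    have hS : Submodule.map J.mkQ B = S :=
      Submodule.map_comap_eq_of_surjective (Submodule.Quotient.mk_surjective J) S
    rw [← hS, ← Submodule.map_sup]
    rw [eq_top_iff]
    intro x _
    obtain ⟨a, rfl⟩ := Submodule.Quotient.mk_surjective J x
    have ha : a ∈ B ⊔ C := by
      have : (⊤ : Ideal Rᵐᵒᵖ) ≤ B ⊔ C := by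
        rw [← hsupKC]
        exact sup_le_sup_right hker_le_B _
      exact this trivial
    exact ⟨a, ha, rfl⟩

theorem P12 (h1 : NoRightPMiddleClass R) :
    ∀ (M : Type u) [AddCommGroup M] [Module Rᵐᵒᵖ M],
      ModProj Rᵐᵒᵖ M M → ¬ IsSemisimpleModule Rᵐᵒᵖ M →
        ∀ (N : Type u) [AddCommGroup N] [Module Rᵐᵒᵖ N], ModProj Rᵐᵒᵖ M N := by
  intro M _ _ hMM hnss N _ _
  rcases h1 M with h | h
  · exact h N
  · exact absurd ((h M).mp hMM) hnss

theorem P23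
    (h2 : ∀ (M : Type u) [AddCommGroup M] [Module Rᵐᵒᵖ M],
      ModProj Rᵐᵒᵖ M M → ¬ IsSemisimpleModule Rᵐᵒᵖ M →
        ∀ (N : Type u) [AddCommGroup N] [Module Rᵐᵒᵖ N], ModProj Rᵐᵒᵖ M N) :
    ∀ I : Ideal Rᵐᵒᵖ, IsTwoSidedRI R I → I ≤ (⊥ : Ideal Rᵐᵒᵖ).jacobson →
      I = ⊥ ∨ I = (⊥ : Ideal Rᵐᵒᵖ).jacobson := by
  intro I htwo hIJ
  by_contra hcon
  push_neg at hcon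
  obtain ⟨hne_bot, hne_J⟩ := hcon
  have hqp : ModProj Rᵐᵒᵖ (Rᵐᵒᵖ ⧸ I) (Rᵐᵒᵖ ⧸ I) := by
    intro K _ _ g hg f
    obtain ⟨nn, hnn⟩ := hg (f (Submodule.Quotient.mk 1))
    obtain ⟨na, rfl⟩ := Submodule.Quotient.mk_surjective I nn
    refine ⟨Submodule.liftQ I (LinearMap.toSpanSingleton Rᵐᵒᵖ _ (Submodule.Quotient.mk na)) ?_,
      ?_⟩
    · intro i hi
      rw [LinearMap.mem_ker, LinearMap.toSpanSingleton_apply, ← Submodule.Quotient.mk_smul,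
        Submodule.Quotient.mk_eq_zero, smul_eq_mul]
      obtain ⟨r, rfl⟩ := MulOpposite.op_surjective na
      exact htwo i hi r
    · intro x
      obtain ⟨a, rfl⟩ := Submodule.Quotient.mk_surjective I x
      rw [Submodule.liftQ_apply, LinearMap.toSpanSingleton_apply, map_smul, hnn, ← map_smul,
        ← Submodule.Quotient.mk_smul, smul_eq_mul, mul_one]
  have hnss : ¬ IsSemisimpleModule Rᵐᵒᵖ (Rᵐᵒᵖ ⧸ I) := by
    intro hss
    apply hne_J
    refine le_antisymm hIJ fun j hj => ?_
    have hk := jkills hss hj (Submodule.Quotient.mk 1 : Rᵐᵒᵖ ⧸ I)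
    rwa [← Submodule.Quotient.mk_smul, smul_eq_mul, mul_one,
      Submodule.Quotient.mk_eq_zero] at hk
  have hproj := h2 (Rᵐᵒᵖ ⧸ I) hqp hnss Rᵐᵒᵖ
  obtain ⟨h, hh⟩ := hproj (Rᵐᵒᵖ ⧸ I) I.mkQ (Submodule.Quotient.mk_surjective I) LinearMap.id
  simp only [LinearMap.id_coe, id_eq] at hh
  apply hne_bot
  have hsup : I ⊔ LinearMap.range h = ⊤ := by
    rw [eq_top_iff]
    intro a _
    have h5 : a - h (Submodule.Quotient.mk a) ∈ I := by
      rw [← Submodule.Quotient.mk_eq_zero, Submodule.Quotient.mk_sub]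
      have := hh (Submodule.Quotient.mk a)
      rw [Submodule.mkQ_apply] at this
      rw [this, sub_self]
    have h6 : a = (a - h (Submodule.Quotient.mk a)) + h (Submodule.Quotient.mk a) := by abel
    rw [h6]
    exact Submodule.add_mem_sup h5 ⟨_, rfl⟩
  have hrange := small_of_le_jac hIJ hsup
  rw [eq_bot_iff]
  intro i hi
  have hmem : (i : Rᵐᵒᵖ) ∈ LinearMap.range h := by rw [hrange]; trivial
  obtain ⟨x, hx⟩ := hmem
  have hx0 : x = 0 := by
    rw [← hh x, Submodule.mkQ_apply, hx, Submodule.Quotient.mk_eq_zero]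
    exact hi
  rw [Submodule.mem_bot, ← hx, hx0, map_zero]

theorem P31 (hperf : RightPerfect R)
    (h3 : ∀ I : Ideal Rᵐᵒᵖ, IsTwoSidedRI R I → I ≤ (⊥ : Ideal Rᵐᵒᵖ).jacobson →
      I = ⊥ ∨ I = (⊥ : Ideal Rᵐᵒᵖ).jacobson) :
    NoRightPMiddleClass R := by
  intro M _ _
  obtain ⟨P, p, hP, hps, hsm⟩ := hperf M
  by_cases hK : LinearMap.ker p = ⊥
  · left
    intro N _ _
    exact modProj_equiv (hP N)
      (LinearEquiv.ofBijective p ⟨LinearMap.ker_eq_bot.mp hK, hps⟩)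
  · right
    intro N _ _
    have hssJ := ss_quot_jac hperf
    constructor
    · intro hMN
      -- show N semisimple
      -- Step 1 : K ≤ J • ⊤
      have hKJ : LinearMap.ker p ≤ ((⊥ : Ideal Rᵐᵒᵖ).jacobson • ⊤ : Submodule Rᵐᵒᵖ P) := by
        set T := ((⊥ : Ideal Rᵐᵒᵖ).jacobson • ⊤ : Submodule Rᵐᵒᵖ P) with hT
        have hann : ∀ j ∈ (⊥ : Ideal Rᵐᵒᵖ).jacobson, ∀ y : (P : Type u) ⧸ T, j • y = 0 := by
          intro j hj y
          obtain ⟨x, rfl⟩ := Submodule.Quotient.mk_surjective T y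
          rw [← Submodule.Quotient.mk_smul, Submodule.Quotient.mk_eq_zero]
          exact Submodule.smul_mem_smul hj trivial
        have hssQ : IsSemisimpleModule Rᵐᵒᵖ ((P : Type u) ⧸ T) := ss_of_J_ann hssJ hann
        have hsmall : ∀ L : Submodule Rᵐᵒᵖ ((P : Type u) ⧸ T),
            (LinearMap.ker p).map T.mkQ ⊔ L = ⊤ → L = ⊤ := by
          intro L hL
          have hsup : LinearMap.ker p ⊔ L.comap T.mkQ = ⊤ := by
            rw [eq_top_iff]
            intro x _
            have hx : T.mkQ x ∈ (LinearMap.ker p).map T.mkQ ⊔ L := by rw [hL]; trivial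
            obtain ⟨y, ⟨k, hk, rfl⟩, l, hl, hyl⟩ := Submodule.mem_sup.mp hx
            have h7 : x - k ∈ L.comap T.mkQ := by
              show T.mkQ (x - k) ∈ L
              rw [map_sub, ← hyl]
              simpa using hl
            have h8 : x = k + (x - k) := by abel
            rw [h8]
            exact Submodule.add_mem_sup hk h7
          have h9 := hsm _ hsup
          rw [eq_top_iff]
          intro y _
          obtain ⟨x, rfl⟩ := Submodule.Quotient.mk_surjective T y
          have : x ∈ L.comap T.mkQ := by rw [h9]; trivial
          exact this
        haveI := hssQ
        obtain ⟨W, hW⟩ := exists_isCompl ((LinearMap.ker p).map T.mkQ)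
        have hWtop : W = ⊤ := hsmall W (codisjoint_iff.mp hW.codisjoint)
        have hKbot : (LinearMap.ker p).map T.mkQ = ⊥ := by
          have hd := hW.disjoint
          rw [hWtop, disjoint_top] at hd
          exact hd
        intro x hx
        have h10 : T.mkQ x = 0 := by
          have : T.mkQ x ∈ (LinearMap.ker p).map T.mkQ := ⟨x, hx, rfl⟩
          rwa [hKbot, Submodule.mem_bot] at this
        rwa [Submodule.mkQ_apply, Submodule.Quotient.mk_eq_zero] at h10
      -- Step 2 : the trace ideal equals J
      set I : Ideal Rᵐᵒᵖ := ⨆ f : ((P : Type u) →ₗ[Rᵐᵒᵖ] Rᵐᵒᵖ), (LinearMap.ker p).map f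
        with hIdef
      have hItwo : IsTwoSidedRI R I := by
        intro x hx r
        set ρ : Rᵐᵒᵖ →ₗ[Rᵐᵒᵖ] Rᵐᵒᵖ := LinearMap.toSpanSingleton Rᵐᵒᵖ Rᵐᵒᵖ (MulOpposite.op r)
          with hρ
        have hmap : Submodule.map ρ I ≤ I := by
          rw [hIdef, Submodule.map_iSup]
          refine iSup_le fun f => ?_
          rw [← Submodule.map_comp]
          exact le_iSup (fun f => (LinearMap.ker p).map f) (ρ ∘ₗ f)
        have : ρ x ∈ I := hmap ⟨x, hx, rfl⟩
        rwa [hρ, LinearMap.toSpanSingleton_apply, smul_eq_mul] at this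
      have hIJ : I ≤ (⊥ : Ideal Rᵐᵒᵖ).jacobson := by
        rw [hIdef]
        refine iSup_le fun f => ?_
        rintro y ⟨x, hx, rfl⟩
        have h11 : f x ∈ Submodule.map f ((⊥ : Ideal Rᵐᵒᵖ).jacobson • ⊤ : Submodule Rᵐᵒᵖ P) :=
          ⟨x, hKJ hx, rfl⟩
        rw [Submodule.map_smul''] at h11
        exact jac_smul_top_le (Submodule.smul_mono le_rfl le_top h11)
      have hIne : I ≠ ⊥ := by
        obtain ⟨x, hxK, hx0⟩ : ∃ x ∈ LinearMap.ker p, x ≠ 0 := by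
          by_contra hcon
          push_neg at hcon
          exact hK (eq_bot_iff.mpr fun x hx => (Submodule.mem_bot _).mpr (hcon x hx))
        obtain ⟨s, hs⟩ := hP ((P : Type u) →₀ Rᵐᵒᵖ) P (Finsupp.linearCombination Rᵐᵒᵖ id)
          (Finsupp.linearCombination_id_surjective Rᵐᵒᵖ (P : Type u)) LinearMap.id
        simp only [LinearMap.id_coe, id_eq] at hs
        have hsx : s x ≠ 0 := by
          intro h0
          apply hx0
          rw [← hs x, h0, map_zero]
        obtain ⟨b, hb⟩ : ∃ b, s x b ≠ 0 := by
          by_contra hcon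
          push_neg at hcon
          exact hsx (Finsupp.ext fun b => by rw [hcon b]; rfl)
        intro hI0
        have hmem : (Finsupp.lapply b ∘ₗ s) x ∈ I := by
          rw [hIdef]
          exact le_iSup (fun f => (LinearMap.ker p).map f) (Finsupp.lapply b ∘ₗ s)
            ⟨x, hxK, rfl⟩
        rw [hI0, Submodule.mem_bot] at hmem
        exact hb (by simpa using hmem)
      have hIJ' : I = (⊥ : Ideal Rᵐᵒᵖ).jacobson := (h3 I hItwo hIJ).resolve_left hIne
      -- Step 3 : N is annihilated by J, via the main lemma
      apply ss_of_J_ann hssJ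
      intro j hj n
      by_contra hjn
      have hjI : j ∈ I := by rw [hIJ']; exact hj
      rw [hIdef, Submodule.mem_iSup_iff_exists_finsupp] at hjI
      obtain ⟨a, ha, hsum⟩ := hjI
      have hjL : j ∉ LinearMap.ker (LinearMap.toSpanSingleton Rᵐᵒᵖ N n) := by
        rw [LinearMap.mem_ker, LinearMap.toSpanSingleton_apply]
        exact hjn
      obtain ⟨f₀, hf₀⟩ : ∃ f₀, a f₀ ∉ LinearMap.ker (LinearMap.toSpanSingleton Rᵐᵒᵖ N n) := by
        by_contra hall
        push_neg at hall
        exact hjL (hsum ▸ Submodule.sum_mem _ fun f _ => hall f)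
      obtain ⟨x₀, hx₀K, hx₀⟩ := ha f₀
      set ψ : (P : Type u) →ₗ[Rᵐᵒᵖ] N := (LinearMap.toSpanSingleton Rᵐᵒᵖ N n) ∘ₗ f₀ with hψ
      have hψx₀ : ψ x₀ ≠ 0 := by
        rw [hψ, LinearMap.comp_apply, hx₀]
        rw [LinearMap.mem_ker] at hf₀
        exact hf₀
      set Z : Submodule Rᵐᵒᵖ N := (LinearMap.ker p).map ψ with hZ
      obtain ⟨f', hf'⟩ := factorThru p hps (Z.mkQ ∘ₗ ψ) (fun x hx => by
        rw [LinearMap.mem_ker, LinearMap.comp_apply, Submodule.mkQ_apply,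
          Submodule.Quotient.mk_eq_zero]
        exact ⟨x, hx, rfl⟩)
      obtain ⟨h, hh⟩ := hMN (N ⧸ Z) Z.mkQ (Submodule.Quotient.mk_surjective Z) f'
      set δ : (P : Type u) →ₗ[Rᵐᵒᵖ] N := ψ - h ∘ₗ p with hδ
      have hδZ : ∀ x : (P : Type u), δ x ∈ Z := by
        intro x
        have h12 : Z.mkQ (δ x) = 0 := by
          have e1 := hf' x
          rw [LinearMap.comp_apply] at e1
          have e2 := hh (p x)
          have e3 : δ x = ψ x - h (p x) := rfl
          rw [e3, map_sub, ← e1, e2, sub_self]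
        rwa [Submodule.mkQ_apply, Submodule.Quotient.mk_eq_zero] at h12
      have hδK : ∀ k ∈ LinearMap.ker p, δ k = ψ k := by
        intro k hk
        have e3 : δ k = ψ k - h (p k) := rfl
        rw [e3, LinearMap.mem_ker.mp hk, map_zero, sub_zero]
      have hZ1 : Z ≤ (⊥ : Ideal Rᵐᵒᵖ).jacobson • Z := by
        rintro z ⟨k, hk, rfl⟩
        rw [← hδK k hk]
        have h13 : δ k ∈ Submodule.map δ ((⊥ : Ideal Rᵐᵒᵖ).jacobson • ⊤ : Submodule Rᵐᵒᵖ P) :=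
          ⟨k, hKJ hk, rfl⟩
        rw [Submodule.map_smul''] at h13
        refine Submodule.smul_mono le_rfl ?_ h13
        rintro y ⟨v, _, rfl⟩
        exact hδZ v
      have hZbot := lv_sub hperf Z hZ1
      apply hψx₀
      have : ψ x₀ ∈ Z := ⟨x₀, hx₀K, rfl⟩
      rwa [hZbot, Submodule.mem_bot] at this
    · intro hss
      exact modProj_of_ss hss

end Perfect

end Aux

/-- for a right perfect ring, TFAE: (1) no right p-middle class;
(2) every non-semisimple quasi-projective right module is projective;
(3) every two-sided ideal contained in `J(R)` is `0` or `J(R)`. -/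
theorem stmt_12 (R : Type u) [Ring R] (hperf : RightPerfect R) :
    (NoRightPMiddleClass R ↔
      ∀ (M : Type u) [AddCommGroup M] [Module Rᵐᵒᵖ M],
        ModProj Rᵐᵒᵖ M M → ¬ IsSemisimpleModule Rᵐᵒᵖ M →
          ∀ (N : Type u) [AddCommGroup N] [Module Rᵐᵒᵖ N], ModProj Rᵐᵒᵖ M N) ∧
    (NoRightPMiddleClass R ↔
      ∀ I : Ideal Rᵐᵒᵖ, IsTwoSidedRI R I → I ≤ (⊥ : Ideal Rᵐᵒᵖ).jacobson →
        I = ⊥ ∨ I = (⊥ : Ideal Rᵐᵒᵖ).jacobson) :=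
  ⟨⟨fun h1 => P12 h1, fun h2 => P31 hperf (P23 h2)⟩,
   ⟨fun h1 => P23 (P12 h1), fun h3 => P31 hperf h3⟩⟩
end

section
/- Let R be a right perfect ring. If R has no right i-middle class, then R has no right p-middle class. -/
universe u

/-- `M` is `N`-injective. -/
def ModInj (A : Type u) [Ring A] (M : Type u) [AddCommGroup M] [Module A M]
    (N : Type u) [AddCommGroup N] [Module A N] : Prop :=
  ∀ (K : Submodule A N) (f : K →ₗ[A] M), ∃ g : N →ₗ[A] M, ∀ x : K, g x = f x

/-- `R` has no right i-middle class. -/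
def NoRightIMiddleClass (R : Type u) [Ring R] : Prop :=
  ∀ (M : Type u) [AddCommGroup M] [Module Rᵐᵒᵖ M],
    (∀ (N : Type u) [AddCommGroup N] [Module Rᵐᵒᵖ N], ModInj Rᵐᵒᵖ M N) ∨
    (∀ (N : Type u) [AddCommGroup N] [Module Rᵐᵒᵖ N],
      ModInj Rᵐᵒᵖ M N ↔ IsSemisimpleModule Rᵐᵒᵖ N)

namespace Stmt13Aux

variable {A : Type u} [Ring A]

/-- If `N` is semisimple then every module is `N`-projective. -/
theorem modProj_of_isSemisimple {M N : Type u} [AddCommGroup M] [Module A M]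
    [AddCommGroup N] [Module A N] (hN : IsSemisimpleModule A N) : ModProj A M N := by
  intro X _ _ g hg f
  obtain ⟨C, hC⟩ := exists_isCompl (LinearMap.ker g)
  have hinj : Function.Injective (g.comp C.subtype) := by
    rw [← LinearMap.ker_eq_bot, LinearMap.ker_comp, Submodule.eq_bot_iff]
    rintro ⟨c, hc⟩ hmem
    have hcmem : c ∈ LinearMap.ker g ⊓ C := ⟨Submodule.mem_comap.mp hmem, hc⟩
    rw [hC.inf_eq_bot] at hcmem
    exact Subtype.ext hcmem
  have hsur : Function.Surjective (g.comp C.subtype) := by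
    intro x
    obtain ⟨n, rfl⟩ := hg x
    have hn : n ∈ LinearMap.ker g ⊔ C := by rw [hC.sup_eq_top]; trivial
    obtain ⟨a, ha, b, hb, rfl⟩ := Submodule.mem_sup.mp hn
    refine ⟨⟨b, hb⟩, ?_⟩
    simp only [LinearMap.comp_apply, Submodule.subtype_apply, map_add,
      LinearMap.mem_ker.mp ha, zero_add]
  let e := LinearEquiv.ofBijective (g.comp C.subtype) ⟨hinj, hsur⟩
  refine ⟨C.subtype.comp ((e.symm : X →ₗ[A] C).comp f), fun m => ?_⟩
  have h1 : ∀ y : C, g (C.subtype y) = e y := fun y => rfl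
  rw [LinearMap.comp_apply, LinearMap.comp_apply, h1]
  simp only [LinearEquiv.coe_coe, LinearEquiv.apply_symm_apply]

/-- Annihilation lemma: if `p : P ↠ M` has superfluous kernel `K` and `M` is
`N`-projective, then every linear map `P → N` kills `K`. -/
theorem ann {M N P : Type u} [AddCommGroup M] [Module A M] [AddCommGroup N] [Module A N]
    [AddCommGroup P] [Module A P] (p : P →ₗ[A] M) (hp : Function.Surjective p)
    (hsmall : Superfluous A (LinearMap.ker p)) (hMN : ModProj A M N)
    (t : P →ₗ[A] N) : ∀ k ∈ LinearMap.ker p, t k = 0 := by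
  classical
  set K := LinearMap.ker p with hK
  set W : Submodule A N := K.map t with hW
  have hle : K ≤ LinearMap.ker (W.mkQ.comp t) := by
    intro k hk
    simp only [LinearMap.mem_ker, LinearMap.comp_apply, Submodule.mkQ_apply,
      Submodule.Quotient.mk_eq_zero]
    exact Submodule.mem_map_of_mem hk
  let e := LinearMap.quotKerEquivOfSurjective p hp
  let fbar : M →ₗ[A] (N ⧸ W) := (K.liftQ (W.mkQ.comp t) hle).comp (e.symm : M →ₗ[A] P ⧸ K)
  have hfbar : ∀ x : P, fbar (p x) = W.mkQ (t x) := by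
    intro x
    have h1 : (e.symm : M →ₗ[A] P ⧸ K) (p x) = Submodule.Quotient.mk x := by
      apply e.injective
      rw [LinearEquiv.coe_coe, e.apply_symm_apply]
      rfl
    show (K.liftQ (W.mkQ.comp t) hle) ((e.symm : M →ₗ[A] P ⧸ K) (p x)) = W.mkQ (t x)
    rw [h1, Submodule.liftQ_apply, LinearMap.comp_apply]
  obtain ⟨hh, hhh⟩ := hMN (N ⧸ W) W.mkQ (Submodule.mkQ_surjective W) fbar
  set ψ : P →ₗ[A] N := t - hh.comp p with hψ
  have hψW : ∀ x : P, ψ x ∈ W := by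
    intro x
    have h2 : W.mkQ (ψ x) = 0 := by
      rw [hψ, LinearMap.sub_apply, map_sub, LinearMap.comp_apply, hhh (p x), hfbar x, sub_self]
    rwa [Submodule.mkQ_apply, Submodule.Quotient.mk_eq_zero] at h2
  have hψK : ∀ k ∈ K, ψ k = t k := by
    intro k hk
    rw [hψ, LinearMap.sub_apply, LinearMap.comp_apply, LinearMap.mem_ker.mp hk, map_zero, sub_zero]
  have hsup : K ⊔ LinearMap.ker ψ = ⊤ := by
    rw [Submodule.eq_top_iff']
    intro x
    obtain ⟨k, hk, hkeq⟩ := Submodule.mem_map.mp (hψW x)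
    have hxk : x - k ∈ LinearMap.ker ψ := by
      rw [LinearMap.mem_ker, map_sub, hψK k hk, hkeq, sub_self]
    exact Submodule.mem_sup.mpr ⟨k, hk, x - k, hxk, by abel⟩
  have hker : LinearMap.ker ψ = ⊤ := hsmall _ hsup
  intro k hk
  have h0 : ψ k = 0 := LinearMap.mem_ker.mp (by rw [hker]; trivial)
  rw [← hψK k hk, h0]

end Stmt13Aux

namespace Stmt13Aux

open CategoryTheory

/-- Core: over a cover with nonzero superfluous kernel, `N`-projectivity of `M`
together with no-i-middle-class forces `N` semisimple. -/
theorem proj_imp_ss (R : Type u) [Ring R]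
    (h : ∀ (M : Type u) [AddCommGroup M] [Module Rᵐᵒᵖ M],
      (∀ (N : Type u) [AddCommGroup N] [Module Rᵐᵒᵖ N], ModInj Rᵐᵒᵖ M N) ∨
      (∀ (N : Type u) [AddCommGroup N] [Module Rᵐᵒᵖ N],
        ModInj Rᵐᵒᵖ M N ↔ IsSemisimpleModule Rᵐᵒᵖ N))
    (M : Type u) [AddCommGroup M] [Module Rᵐᵒᵖ M]
    (P : Type u) [AddCommGroup P] [Module Rᵐᵒᵖ P]
    (p : P →ₗ[Rᵐᵒᵖ] M)
    (hPproj : ∀ (V : Type u) [AddCommGroup V] [Module Rᵐᵒᵖ V], ModProj Rᵐᵒᵖ P V)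
    (hp : Function.Surjective p) (hsmall : Superfluous Rᵐᵒᵖ (LinearMap.ker p))
    (hKne : LinearMap.ker p ≠ ⊥)
    (N : Type u) [AddCommGroup N] [Module Rᵐᵒᵖ N] (hMN : ModProj Rᵐᵒᵖ M N) :
    IsSemisimpleModule Rᵐᵒᵖ N := by
  classical
  set K := LinearMap.ker p with hKdef
  -- an injective container of ↥K
  let Kobj := ModuleCat.of Rᵐᵒᵖ ↥K
  let Eobj := Injective.under Kobj
  let E : Type u := ↥Eobj
  have hEinj : Module.Injective Rᵐᵒᵖ E :=
    letI : CategoryTheory.Injective (ModuleCat.of Rᵐᵒᵖ E) :=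
      (inferInstance : CategoryTheory.Injective Eobj)
    Module.injective_module_of_injective_object Rᵐᵒᵖ E
  let j : ↥K →ₗ[Rᵐᵒᵖ] E := (Injective.ι Kobj).hom
  have hjinj : Function.Injective j := by
    have : Mono (Injective.ι Kobj) := inferInstance
    exact (ModuleCat.mono_iff_injective (Injective.ι Kobj)).mp this
  -- extension property of E
  have hEext : ∀ (V : Type u) [AddCommGroup V] [Module Rᵐᵒᵖ V] (A' : Submodule Rᵐᵒᵖ V)
      (f : ↥A' →ₗ[Rᵐᵒᵖ] E), ∃ g : V →ₗ[Rᵐᵒᵖ] E, ∀ x : ↥A', g x = f x := by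
    intro V _ _ A' f
    obtain ⟨g, hg⟩ := hEinj.out A'.subtype A'.injective_subtype f
    exact ⟨g, hg⟩
  set S : Submodule Rᵐᵒᵖ E := ⨆ v : N →ₗ[Rᵐᵒᵖ] E, LinearMap.range v with hSdef
  set K' : Submodule Rᵐᵒᵖ E := LinearMap.range j with hK'def
  set T : Submodule Rᵐᵒᵖ E := K' ⊔ S with hTdef
  rcases h ↥T with hTinj | hTpoor
  · -- T injective: derive False
    exfalso
    obtain ⟨k₀, hk₀K, hk₀ne⟩ : ∃ x, x ∈ K ∧ x ≠ 0 := by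
      by_contra hcon
      push_neg at hcon
      exact hKne (Submodule.eq_bot_iff K |>.mpr hcon)
    have hKT : ∀ y : ↥K, j y ∈ T := fun y => Submodule.mem_sup_left ⟨y, rfl⟩
    let f0 : ↥K →ₗ[Rᵐᵒᵖ] ↥T := LinearMap.codRestrict T j hKT
    obtain ⟨u, hu⟩ := hTinj P K f0
    -- smallness of K.map u in ↥T
    have hsmallT : ∀ L : Submodule Rᵐᵒᵖ ↥T, (K.map u) ⊔ L = ⊤ → L = ⊤ := by
      intro L hL
      have hcomap : K ⊔ L.comap u = ⊤ := by
        rw [Submodule.eq_top_iff']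
        intro x
        have hx : u x ∈ (K.map u) ⊔ L := by rw [hL]; trivial
        obtain ⟨a, ha, b, hb, hab⟩ := Submodule.mem_sup.mp hx
        obtain ⟨k, hk, rfl⟩ := Submodule.mem_map.mp ha
        have hxk : x - k ∈ L.comap u := by
          rw [Submodule.mem_comap, map_sub]
          have : u x - u k = b := by rw [← hab]; abel
          rw [this]; exact hb
        exact Submodule.mem_sup.mpr ⟨k, hk, x - k, hxk, by abel⟩
      have hLtop : L.comap u = ⊤ := hsmall _ hcomap
      have hrange : ∀ x : P, u x ∈ L := by
        intro x
        have : x ∈ L.comap u := by rw [hLtop]; trivial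
        exact Submodule.mem_comap.mp this
      rw [Submodule.eq_top_iff']
      intro y
      have hy : y ∈ K.map u ⊔ L := by rw [hL]; trivial
      obtain ⟨a, ha, b, hb, rfl⟩ := Submodule.mem_sup.mp hy
      obtain ⟨k, hk, rfl⟩ := Submodule.mem_map.mp ha
      exact L.add_mem (hrange k) hb
    -- the S-part of T is everything
    have hStop : ∀ e : ↥T, (e : E) ∈ S := by
      have hsup2 : (K.map u) ⊔ S.comap T.subtype = ⊤ := by
        rw [Submodule.eq_top_iff']
        intro e
        have he : (e : E) ∈ K' ⊔ S := by rw [← hTdef]; exact e.2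
        obtain ⟨a, ha, b, hb, hab⟩ := Submodule.mem_sup.mp he
        obtain ⟨y, rfl⟩ := ha
        have haT : j y ∈ T := hKT y
        have hbT : b ∈ T := Submodule.mem_sup_right hb
        have hea : (⟨j y, haT⟩ : ↥T) ∈ K.map u := by
          refine Submodule.mem_map.mpr ⟨(y : P), y.2, ?_⟩
          have := hu y
          apply Subtype.ext
          rw [this]
          rfl
        have heb : (⟨b, hbT⟩ : ↥T) ∈ S.comap T.subtype := hb
        have : e = (⟨j y, haT⟩ : ↥T) + ⟨b, hbT⟩ := by
          apply Subtype.ext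
          rw [← hab]
          rfl
        rw [this]
        exact Submodule.add_mem _ (Submodule.mem_sup_left hea) (Submodule.mem_sup_right heb)
      have := hsmallT _ hsup2
      intro e
      have he : e ∈ S.comap T.subtype := by rw [this]; trivial
      exact he
    -- direct sum of copies of N surjects onto ↥T
    let ι := (N →ₗ[Rᵐᵒᵖ] E)
    let Ψ : (DirectSum ι (fun _ => N)) →ₗ[Rᵐᵒᵖ] E := DirectSum.toModule Rᵐᵒᵖ ι E (fun v => v)
    have hΨS : ∀ x, Ψ x ∈ S := by
      intro x
      induction x using DirectSum.induction_on with
      | zero => rw [map_zero]; exact S.zero_mem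
      | of v n =>
        have : Ψ (DirectSum.of (fun _ : ι => N) v n) = v n := by
          have h2 := DirectSum.toModule_lof (R := Rᵐᵒᵖ) (ι := ι) (N := E)
            (φ := fun v : ι => v) v n
          simpa [DirectSum.lof_eq_of] using h2
        rw [this]
        exact (le_iSup (fun v : ι => LinearMap.range v) v) ⟨n, rfl⟩
      | add x y hx hy => rw [map_add]; exact S.add_mem hx hy
    have hΨT : ∀ x, Ψ x ∈ T := fun x => Submodule.mem_sup_right (hΨS x)
    let Φ : (DirectSum ι (fun _ => N)) →ₗ[Rᵐᵒᵖ] ↥T := LinearMap.codRestrict T Ψ hΨT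
    have hΦsurj : Function.Surjective Φ := by
      intro e
      have heS : (e : E) ∈ S := hStop e
      have hSle : S ≤ LinearMap.range Ψ := by
        rw [hSdef]
        apply iSup_le
        intro v
        rintro _ ⟨n, rfl⟩
        refine ⟨DirectSum.lof Rᵐᵒᵖ ι (fun _ => N) v n, ?_⟩
        exact DirectSum.toModule_lof (R := Rᵐᵒᵖ) (ι := ι) (N := E)
          (φ := fun v : ι => v) v n
      obtain ⟨x, hx⟩ := hSle heS
      exact ⟨x, Subtype.ext hx⟩
    obtain ⟨tt, htt⟩ := hPproj (DirectSum ι (fun _ => N)) ↥T Φ hΦsurj u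
    have hzero : tt k₀ = 0 := by
      apply DirectSum.ext_component Rᵐᵒᵖ
      intro v
      have := ann p hp hsmall hMN ((DirectSum.component Rᵐᵒᵖ ι (fun _ => N) v).comp tt) k₀ hk₀K
      rw [LinearMap.comp_apply] at this
      rw [this, map_zero]
    have hcontr : u k₀ = 0 := by rw [← htt k₀, hzero, map_zero]
    have hval : (u k₀ : E) = j ⟨k₀, hk₀K⟩ := by
      have := hu ⟨k₀, hk₀K⟩
      rw [show ((⟨k₀, hk₀K⟩ : ↥K) : P) = k₀ from rfl] at this
      rw [this]
      rfl
    have : j ⟨k₀, hk₀K⟩ = 0 := by rw [← hval, hcontr]; rfl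
    have h0 : (⟨k₀, hk₀K⟩ : ↥K) = 0 := hjinj (by rw [this, map_zero])
    exact hk₀ne (by simpa using congrArg Subtype.val h0)
  · -- T poor: T is N-injective by construction, hence N is semisimple
    apply (hTpoor N).mp
    intro A' f
    obtain ⟨F, hF⟩ := hEext N A' (T.subtype.comp f)
    have hrangeT : ∀ n : N, F n ∈ T := by
      intro n
      have : F n ∈ S := (le_iSup (fun v : (N →ₗ[Rᵐᵒᵖ] E) => LinearMap.range v) F) ⟨n, rfl⟩
      exact Submodule.mem_sup_right this
    refine ⟨LinearMap.codRestrict T F hrangeT, fun x => ?_⟩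
    apply Subtype.ext
    have : F x = T.subtype (f x) := hF x
    rw [LinearMap.codRestrict_apply, this]
    rfl

end Stmt13Aux

/-- a right perfect ring with no right i-middle class has no right
p-middle class. -/
theorem stmt_13 (R : Type u) [Ring R] (hperf : RightPerfect R)
    (h : NoRightIMiddleClass R) : NoRightPMiddleClass R := by
  intro M _ _
  by_cases hM : ∀ (N : Type u) [AddCommGroup N] [Module Rᵐᵒᵖ N], ModProj Rᵐᵒᵖ M N
  · exact Or.inl hM
  · right
    obtain ⟨P, p, hPproj, hp, hsmall⟩ := hperf M
    have hKne : LinearMap.ker p ≠ ⊥ := by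
      intro hbot
      apply hM
      intro N _ _
      have hpinj : Function.Injective p := LinearMap.ker_eq_bot.mp hbot
      let e := LinearEquiv.ofBijective p ⟨hpinj, hp⟩
      intro X _ _ g hg f
      obtain ⟨h', hh'⟩ := hPproj N X g hg (f.comp (e : ↑P →ₗ[Rᵐᵒᵖ] M))
      refine ⟨h'.comp (e.symm : M →ₗ[Rᵐᵒᵖ] ↑P), fun m => ?_⟩
      rw [LinearMap.comp_apply, hh', LinearMap.comp_apply]
      simp only [LinearEquiv.coe_coe, LinearEquiv.apply_symm_apply]
    intro N _ _
    constructor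
    · intro hMN
      exact Stmt13Aux.proj_imp_ss R h M (↑P) p hPproj hp hsmall hKne N hMN
    · intro hss
      exact Stmt13Aux.modProj_of_isSemisimple hss
end

section
/- Let R be an artinian ring that is not semisimple and whose right p-profile is linearly ordered. Then for every right R-module M that is not p-poor, there exists a simple right R-module S whose projectivity domain is strictly contained in the projectivity domain of M. -/
universe u

/-- The right p-profile of `R` is linearly ordered: projectivity domains of any two
right `R`-modules are comparable. -/
def PProfileLinear (R : Type u) [Ring R] : Prop :=
  ∀ (M N : Type u) [AddCommGroup M] [Module Rᵐᵒᵖ M] [AddCommGroup N] [Module Rᵐᵒᵖ N],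
    (∀ (X : Type u) [AddCommGroup X] [Module Rᵐᵒᵖ X],
      ModProj Rᵐᵒᵖ M X → ModProj Rᵐᵒᵖ N X) ∨
    (∀ (X : Type u) [AddCommGroup X] [Module Rᵐᵒᵖ X],
      ModProj Rᵐᵒᵖ N X → ModProj Rᵐᵒᵖ M X)

section Lemmas

variable {A : Type u} [Ring A]

theorem modProj_of_isSemisimple (M N : Type u) [AddCommGroup M] [Module A M]
    [AddCommGroup N] [Module A N] [IsSemisimpleModule A N] : ModProj A M N := by
  intro K _ _ g hg f
  obtain ⟨q, hq⟩ := exists_isCompl (LinearMap.ker g)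
  have hbij : Function.Bijective (g ∘ₗ q.subtype) := by
    constructor
    · intro a b hab
      have h1 : g ((a : N) - b) = 0 := by
        have : g (a : N) = g (b : N) := hab
        rw [map_sub, this, sub_self]
      have h2 : (a : N) - b ∈ LinearMap.ker g ⊓ q :=
        ⟨LinearMap.mem_ker.2 h1, sub_mem a.2 b.2⟩
      rw [hq.inf_eq_bot] at h2
      rw [Submodule.mem_bot, sub_eq_zero] at h2
      exact Subtype.ext h2
    · intro k
      obtain ⟨n, hn⟩ := hg k
      have : n ∈ LinearMap.ker g ⊔ q := by rw [hq.sup_eq_top]; trivial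
      obtain ⟨a, ha, b, hb, rfl⟩ := Submodule.mem_sup.mp this
      refine ⟨⟨b, hb⟩, ?_⟩
      have ha0 : g a = 0 := LinearMap.mem_ker.mp ha
      show g b = k
      rw [← hn, map_add, ha0, zero_add]
  let e := LinearEquiv.ofBijective (g ∘ₗ q.subtype) hbij
  refine ⟨q.subtype ∘ₗ e.symm.toLinearMap ∘ₗ f, fun x => ?_⟩
  exact e.apply_symm_apply (f x)

theorem modProj_quotient {M N N' : Type u} [AddCommGroup M] [Module A M]
    [AddCommGroup N] [Module A N] [AddCommGroup N'] [Module A N']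
    (hM : ModProj A M N) (π : N →ₗ[A] N') (hπ : Function.Surjective π) :
    ModProj A M N' := by
  intro K _ _ g hg f
  obtain ⟨h, hh⟩ := hM K (g ∘ₗ π) (hg.comp hπ) f
  exact ⟨π ∘ₗ h, fun x => hh x⟩

theorem modProj_submodule {M N : Type u} [AddCommGroup M] [Module A M]
    [AddCommGroup N] [Module A N]
    (hM : ModProj A M N) (p : Submodule A N) : ModProj A M p := by
  intro K _ _ g hg f
  classical
  set Q : Submodule A N := (LinearMap.ker g).map p.subtype with hQ
  have hQp : Q ≤ p := by
    rintro x ⟨y, -, rfl⟩; exact y.2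
  set φ : ↥p →ₗ[A] N ⧸ Q := Q.mkQ ∘ₗ p.subtype with hφ
  have hker : LinearMap.ker g ≤ LinearMap.ker φ := by
    intro x hx
    simp only [hφ, LinearMap.mem_ker, LinearMap.coe_comp, Function.comp_apply,
      Submodule.coe_subtype, Submodule.mkQ_apply, Submodule.Quotient.mk_eq_zero]
    exact ⟨x, hx, rfl⟩
  have hker' : LinearMap.ker φ ≤ LinearMap.ker g := by
    intro x hx
    simp only [hφ, LinearMap.mem_ker, LinearMap.coe_comp, Function.comp_apply,
      Submodule.coe_subtype, Submodule.mkQ_apply, Submodule.Quotient.mk_eq_zero] at hx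
    obtain ⟨y, hy, hyx⟩ := hx
    have : y = x := Subtype.ext hyx
    rwa [← this]
  let e : (↥p ⧸ LinearMap.ker g) ≃ₗ[A] K := g.quotKerEquivOfSurjective hg
  set ι : K →ₗ[A] N ⧸ Q := ((LinearMap.ker g).liftQ φ hker) ∘ₗ e.symm.toLinearMap with hι
  have he : ∀ z : ↥p, e (Submodule.Quotient.mk z) = g z := fun z => rfl
  have hιg : ∀ z : ↥p, ι (g z) = φ z := by
    intro z
    have : e.symm (g z) = Submodule.Quotient.mk z := by
      rw [← he z, e.symm_apply_apply]
    simp only [hι, LinearMap.coe_comp, Function.comp_apply, LinearEquiv.coe_coe, this,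
      Submodule.liftQ_apply]
  have hιinj : Function.Injective ι := by
    have h1 : Function.Injective ((LinearMap.ker g).liftQ φ hker) := by
      rw [← LinearMap.ker_eq_bot]
      exact Submodule.ker_liftQ_eq_bot _ _ _ hker'
    exact h1.comp e.symm.injective
  obtain ⟨h, hh⟩ := hM (N ⧸ Q) Q.mkQ Q.mkQ_surjective (ι ∘ₗ f)
  have hmem : ∀ x : M, h x ∈ p := by
    intro x
    obtain ⟨z, hz⟩ := hg (f x)
    have : Q.mkQ (h x) = Q.mkQ (z : N) := by
      have h2 : ι (f x) = φ z := by rw [← hz, hιg]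
      have h3 : Q.mkQ (h x) = ι (f x) := hh x
      rw [h3, h2]; rfl
    have : (h x : N) - z ∈ Q := by
      rw [Submodule.mkQ_apply, Submodule.mkQ_apply, Submodule.Quotient.eq] at this
      exact this
    have := hQp this
    have hz2 : (z : N) ∈ p := z.2
    simpa using add_mem this hz2
  refine ⟨h.codRestrict p hmem, fun x => hιinj ?_⟩
  have h4 : φ (h.codRestrict p hmem x) = Q.mkQ (h x) := rfl
  rw [hιg, h4, hh x]; rfl

theorem semisimple_of_simples_modProj (C : Type u) [AddCommGroup C] [Module A C]
    [Module.Finite A C]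
    (h : ∀ (S : Type u) (_ : AddCommGroup S) (_ : Module A S),
      IsSimpleModule A S → ModProj A S C) : IsSemisimpleModule A C := by
  rw [← sSup_simples_eq_top_iff_isSemisimpleModule]
  by_contra hs
  set s := sSup {m : Submodule A C | IsSimpleModule A m} with hsdef
  have hlt : s < ⊤ := lt_top_iff_ne_top.2 hs
  have hnt : Nontrivial (C ⧸ s) := Submodule.Quotient.nontrivial_iff.2 hlt.ne
  have hfin : Module.Finite A (C ⧸ s) := inferInstance
  have hco : IsCoatomic (Submodule A (C ⧸ s)) :=
    CompleteLattice.coatomic_of_top_compact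
      ((Submodule.fg_iff_compact _).1 Module.Finite.fg_top)
  obtain ⟨m, hm, -⟩ := (eq_top_or_exists_le_coatom (⊥ : Submodule A (C ⧸ s))).resolve_left
    bot_ne_top
  haveI hS : IsSimpleModule A ((C ⧸ s) ⧸ m) := isSimpleModule_iff_isCoatom.2 hm
  set φ : C →ₗ[A] ((C ⧸ s) ⧸ m) := m.mkQ ∘ₗ s.mkQ with hφdef
  have hφ : Function.Surjective φ := m.mkQ_surjective.comp s.mkQ_surjective
  obtain ⟨h', hh'⟩ := h _ inferInstance inferInstance hS _ φ hφ LinearMap.id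
  have hinj : Function.Injective h' := by
    intro a b hab
    have : φ (h' a) = φ (h' b) := by rw [hab]
    rwa [hh', hh'] at this
  have hrange : IsSimpleModule A ↥(LinearMap.range h') :=
    IsSimpleModule.congr (LinearEquiv.ofInjective h' hinj).symm
  have hle : LinearMap.range h' ≤ s := le_sSup hrange
  have key : ∀ z : (C ⧸ s) ⧸ m, z = 0 := by
    intro z
    have h1 : (h' z : C) ∈ s := hle ⟨z, rfl⟩
    have h2 : φ (h' z) = z := hh' z
    have h3 : s.mkQ (h' z) = 0 := (Submodule.Quotient.mk_eq_zero s).2 h1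
    rw [hφdef] at h2
    simp only [LinearMap.coe_comp, Function.comp_apply] at h2
    rw [show s.mkQ (h' z) = 0 from h3] at h2
    rw [← h2]; simp
  have hnt2 : Nontrivial ((C ⧸ s) ⧸ m) :=
    Submodule.Quotient.nontrivial_iff.2 (lt_top_iff_ne_top.2 hm.1).ne
  obtain ⟨a, b, hab⟩ := exists_pair_ne ((C ⧸ s) ⧸ m)
  exact hab (by rw [key a, key b])

theorem exists_cyclic_not_semisimple {N : Type u} [AddCommGroup N] [Module A N]
    (hN : ¬ IsSemisimpleModule A N) :
    ∃ n : N, ¬ IsSemisimpleModule A ↥(Submodule.span A {n}) := by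
  by_contra hc
  push_neg at hc
  refine hN (isSemisimpleModule_of_isSemisimpleModule_submodule' hc ?_)
  rw [eq_top_iff]
  intro x _
  exact Submodule.mem_iSup_of_mem x (Submodule.mem_span_singleton_self x)

theorem exists_simple_not_modProj {N : Type u} [AddCommGroup N] [Module A N]
    (hN : ¬ IsSemisimpleModule A N) :
    ∃ S : ModuleCat.{u} A, IsSimpleModule A S ∧ ¬ ModProj A S N := by
  obtain ⟨n, hn⟩ := exists_cyclic_not_semisimple hN
  by_contra hc
  push_neg at hc
  haveI : Module.Finite A ↥(Submodule.span A {n}) :=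
    Module.Finite.iff_fg.2 (Submodule.fg_span_singleton n)
  refine hn (semisimple_of_simples_modProj _ (fun S i1 i2 hS => ?_))
  exact modProj_submodule (hc (ModuleCat.of A S) hS) _

end Lemmas

/-- if `R` is (two-sided) artinian, not semisimple, and its right
p-profile is linearly ordered, then for every right module `M` that is not p-poor there
is a simple module `S` whose projectivity domain is strictly contained in that of `M`. -/
theorem stmt_14 (R : Type u) [Ring R] [IsArtinianRing R] [IsArtinianRing Rᵐᵒᵖ]
    (hns : ¬ IsSemisimpleRing Rᵐᵒᵖ) (hlin : PProfileLinear R)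
    (M : Type u) [AddCommGroup M] [Module Rᵐᵒᵖ M]
    (hM : ¬ ∀ (N : Type u) [AddCommGroup N] [Module Rᵐᵒᵖ N],
      ModProj Rᵐᵒᵖ M N ↔ IsSemisimpleModule Rᵐᵒᵖ N) :
    ∃ S : ModuleCat.{u} Rᵐᵒᵖ, IsSimpleModule Rᵐᵒᵖ S ∧
      (∀ (N : Type u) [AddCommGroup N] [Module Rᵐᵒᵖ N],
        ModProj Rᵐᵒᵖ S N → ModProj Rᵐᵒᵖ M N) ∧
      (∃ N : ModuleCat.{u} Rᵐᵒᵖ, ModProj Rᵐᵒᵖ M N ∧ ¬ ModProj Rᵐᵒᵖ S N) := by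
  classical
  have hMN : ∃ (N : Type u) (i1 : AddCommGroup N) (i2 : @Module Rᵐᵒᵖ N _ i1.toAddCommMonoid),
      @ModProj Rᵐᵒᵖ _ M _ _ N i1 i2 ∧ ¬ @IsSemisimpleModule Rᵐᵒᵖ _ N i1 i2 := by
    by_contra hc
    push_neg at hc
    apply hM
    intro N i1 i2
    exact ⟨hc N i1 i2, fun h => modProj_of_isSemisimple M N⟩
  obtain ⟨N₀, i1, i2, hproj, hss⟩ := hMN
  obtain ⟨S, hSsimple, hSnot⟩ := exists_simple_not_modProj hss
  rcases hlin S M with hdom | hdom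
  · exact ⟨S, hSsimple, fun N _ _ h => hdom N h,
      ⟨ModuleCat.of Rᵐᵒᵖ N₀, hproj, hSnot⟩⟩
  · exact absurd (hdom N₀ hproj) hSnot
end

section
/- Let R be a right super QF ring and let I be a two-sided ideal of R. Then the quotient ring R/I is right super QF. -/
universe u

/-- `R` is right super QF: for all right `R`-modules `M, N`, `M` is `N`-injective iff
`M` is `N`-projective. -/
def RightSuperQF (R : Type u) [Ring R] : Prop :=
  ∀ (M N : Type u) [AddCommGroup M] [Module Rᵐᵒᵖ M] [AddCommGroup N] [Module Rᵐᵒᵖ N],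
    ModInj Rᵐᵒᵖ M N ↔ ModProj Rᵐᵒᵖ M N

/-- Transfer of the super QF property along a surjective ring homomorphism. -/
theorem sqf_transfer {A B : Type u} [Ring A] [Ring B] (π : A →+* B)
    (hπ : Function.Surjective π)
    (hA : ∀ (M N : Type u) [AddCommGroup M] [Module A M] [AddCommGroup N] [Module A N],
      ModInj A M N ↔ ModProj A M N)
    (M N : Type u) [AddCommGroup M] [Module B M] [AddCommGroup N] [Module B N] :
    ModInj B M N ↔ ModProj B M N := by
  letI iM : Module A M := Module.compHom M π
  letI iN : Module A N := Module.compHom N π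
  have injBA : ModInj B M N ↔ ModInj A M N := by
    constructor
    · intro hB K f
      let KB : Submodule B N :=
        { carrier := K
          add_mem' := fun h1 h2 => K.add_mem h1 h2
          zero_mem' := K.zero_mem
          smul_mem' := fun b x hx => by obtain ⟨a, rfl⟩ := hπ b; exact K.smul_mem a hx }
      let fB : KB →ₗ[B] M :=
        { toFun := fun x => f ⟨x.1, x.2⟩
          map_add' := fun x y => f.map_add ⟨x.1, x.2⟩ ⟨y.1, y.2⟩
          map_smul' := fun b x => by
            obtain ⟨a, rfl⟩ := hπ b
            exact f.map_smul a ⟨x.1, x.2⟩ }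
      obtain ⟨g, hg⟩ := hB KB fB
      refine ⟨{ toFun := g, map_add' := g.map_add,
                map_smul' := fun a x => g.map_smul (π a) x }, ?_⟩
      intro x
      exact hg ⟨x.1, x.2⟩
    · intro hA' K f
      let KA : Submodule A N :=
        { carrier := K
          add_mem' := fun h1 h2 => K.add_mem h1 h2
          zero_mem' := K.zero_mem
          smul_mem' := fun a x hx => K.smul_mem (π a) hx }
      let fA : KA →ₗ[A] M :=
        { toFun := fun x => f ⟨x.1, x.2⟩
          map_add' := fun x y => f.map_add ⟨x.1, x.2⟩ ⟨y.1, y.2⟩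
          map_smul' := fun a x => f.map_smul (π a) ⟨x.1, x.2⟩ }
      obtain ⟨g, hg⟩ := hA' KA fA
      refine ⟨{ toFun := g, map_add' := g.map_add,
                map_smul' := fun b x => by
                  obtain ⟨a, rfl⟩ := hπ b
                  exact g.map_smul a x }, ?_⟩
      intro x
      exact hg ⟨x.1, x.2⟩
  have projAB : ModProj A M N → ModProj B M N := by
    intro hA' K _ _ g hg f
    letI iK : Module A K := Module.compHom K π
    obtain ⟨h, hh⟩ := hA' K
      { toFun := g, map_add' := g.map_add,
        map_smul' := fun a x => g.map_smul (π a) x } hg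
      { toFun := f, map_add' := f.map_add,
        map_smul' := fun a x => f.map_smul (π a) x }
    exact ⟨{ toFun := h, map_add' := h.map_add,
             map_smul' := fun b x => by
               obtain ⟨a, rfl⟩ := hπ b
               exact h.map_smul a x }, hh⟩
  have projBA : ModProj B M N → ModProj A M N := by
    intro hB K _ _ g hg f
    -- `K` is an `A`-module; the kernel of `π` acts trivially on `K` since `g` is
    -- surjective from `N`, so `K` carries a `B`-module structure.
    have hker : ∀ a : A, π a = 0 → ∀ k : K, a • k = 0 := by
      intro a ha k
      obtain ⟨n, rfl⟩ := hg k
      have h1 : a • n = ((0 : B) • n : N) := by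
        show π a • n = (0 : B) • n
        rw [ha]
      rw [← g.map_smul, h1, zero_smul, g.map_zero]
    letI sB : SMul B K := ⟨fun b k => (hπ b).choose • k⟩
    have hsmul : ∀ (a : A) (k : K), (π a) • k = a • k := by
      intro a k
      show (hπ (π a)).choose • k = a • k
      have h1 : π ((hπ (π a)).choose - a) = 0 := by
        rw [map_sub, (hπ (π a)).choose_spec, sub_self]
      have h2 := hker _ h1 k
      rw [sub_smul, sub_eq_zero] at h2
      exact h2
    letI mB : Module B K :=
      { smul := sB.smul
        one_smul := fun k => by rw [← map_one π, hsmul, one_smul]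
        mul_smul := fun b1 b2 k => by
          obtain ⟨a1, rfl⟩ := hπ b1
          obtain ⟨a2, rfl⟩ := hπ b2
          rw [← map_mul, hsmul, hsmul, hsmul, mul_smul]
        smul_zero := fun b => by
          obtain ⟨a, rfl⟩ := hπ b
          rw [hsmul, smul_zero]
        smul_add := fun b k1 k2 => by
          obtain ⟨a, rfl⟩ := hπ b
          rw [hsmul, hsmul, hsmul, smul_add]
        add_smul := fun b1 b2 k => by
          obtain ⟨a1, rfl⟩ := hπ b1
          obtain ⟨a2, rfl⟩ := hπ b2
          rw [← map_add, hsmul, hsmul, hsmul, add_smul]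
        zero_smul := fun k => by rw [← map_zero π, hsmul, zero_smul] }
    let gB : N →ₗ[B] K :=
      { toFun := g, map_add' := g.map_add,
        map_smul' := fun b n => by
          obtain ⟨a, rfl⟩ := hπ b
          show g (π a • n) = π a • g n
          rw [hsmul]
          exact g.map_smul a n }
    let fB : M →ₗ[B] K :=
      { toFun := f, map_add' := f.map_add,
        map_smul' := fun b m => by
          obtain ⟨a, rfl⟩ := hπ b
          show f (π a • m) = π a • f m
          rw [hsmul]
          exact f.map_smul a m }
    obtain ⟨h, hh⟩ := hB K gB hg fB
    exact ⟨{ toFun := h, map_add' := h.map_add,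
             map_smul' := fun a x => h.map_smul (π a) x }, hh⟩
  rw [injBA, hA M N]
  exact ⟨projAB, projBA⟩

/-- a quotient of a right super QF ring by a two-sided ideal is right
super QF. -/
theorem stmt_15 (R : Type u) [Ring R] (h : RightSuperQF R) (I : TwoSidedIdeal R) :
    RightSuperQF I.ringCon.Quotient := by
  have hπ : Function.Surjective (RingHom.op I.ringCon.mk') := by
    intro x
    obtain ⟨r, hr⟩ : ∃ r, I.ringCon.mk' r = x.unop := Quot.inductionOn x.unop fun r => ⟨r, rfl⟩
    exact ⟨MulOpposite.op r, by show MulOpposite.op (I.ringCon.mk' r) = x; rw [hr, MulOpposite.op_unop]⟩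
  intro M N _ _ _ _
  exact sqf_transfer (RingHom.op I.ringCon.mk') hπ h M N
end

section
/- Let R₁ and R₂ be right super QF rings. Then the product ring R₁ × R₂ is right super QF. -/
universe u

/-- A "corner" of a ring `S`: a ring `A` realized via a central idempotent `e = ε 1`. -/
class Corner (S A : Type u) [Ring S] [Ring A] where
  ε : A →ₙ+* S
  π : S →+* A
  πε : ∀ a, π (ε a) = a
  επl : ∀ s, ε (π s) = ε 1 * s
  επr : ∀ s, ε (π s) = s * ε 1

variable (S A : Type u) [Ring S] [Ring A] [Corner S A]

def cE : A →ₙ+* S := Corner.ε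
def cP : S →+* A := Corner.π

namespace Corner

variable {S A}

lemma cPE (a : A) : cP S A (cE S A a) = a := Corner.πε a
lemma cEPl (s : S) : cE S A (cP S A s) = cE S A 1 * s := Corner.επl s
lemma cEPr (s : S) : cE S A (cP S A s) = s * cE S A 1 := Corner.επr s

lemma e_mul_ε (a : A) : cE S A 1 * cE S A a = cE S A a := by
  have h := cEPl (A := A) (cE S A a); rw [cPE] at h; exact h.symm

lemma ε_mul_e (a : A) : cE S A a * cE S A 1 = cE S A a := by
  have h := cEPr (A := A) (cE S A a); rw [cPE] at h; exact h.symm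

lemma e_comm (s : S) : cE S A 1 * s = s * cE S A 1 := by
  rw [← cEPl (A := A) s, cEPr (A := A) s]

variable (S A) in
/-- The corner piece of an `S`-module. -/
def cSub (M : Type u) [AddCommGroup M] [Module S M] : Submodule S M where
  carrier := {m | cE S A 1 • m = m}
  add_mem' := by intro x y hx hy; simp only [Set.mem_setOf_eq, smul_add] at *; rw [hx, hy]
  zero_mem' := by simp
  smul_mem' := by
    intro s m hm
    show cE S A 1 • s • m = s • m
    rw [← mul_smul, e_comm (A := A) s, mul_smul]
    exact congrArg (s • ·) hm

variable {M : Type u} [AddCommGroup M] [Module S M]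

lemma mem_cSub_iff (m : M) : m ∈ cSub S A M ↔ cE S A 1 • m = m := Iff.rfl

variable (S A) in
lemma e_smul_mem (m : M) : cE S A 1 • m ∈ cSub S A M := by
  show cE S A 1 • _ = _
  rw [← mul_smul, e_mul_ε (A := A) 1]

lemma smul_coe (x : ↥(cSub S A M)) (s : S) : s • (x : M) = cE S A (cP S A s) • (x : M) := by
  conv_lhs => rw [← x.2]
  rw [← mul_smul, ← cEPr (A := A) s]

instance cMod : Module A ↥(cSub S A M) where
  smul a x := ⟨cE S A a • (x : M), by
    show cE S A 1 • _ = _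
    rw [← mul_smul, e_mul_ε]⟩
  one_smul x := Subtype.ext x.2
  mul_smul a b x := Subtype.ext (by
    show cE S A (a * b) • (x : M) = cE S A a • cE S A b • (x : M)
    rw [map_mul, mul_smul])
  smul_zero a := Subtype.ext (by show cE S A a • ((0 : ↥(cSub S A M)) : M) = 0; simp)
  smul_add a x y := Subtype.ext (by
    show cE S A a • ((x : M) + y) = _
    rw [smul_add]; rfl)
  add_smul a b x := Subtype.ext (by
    show cE S A (a + b) • (x : M) = _
    rw [map_add, add_smul]; rfl)
  zero_smul x := Subtype.ext (by show cE S A (0 : A) • (x : M) = 0; simp)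

@[simp] lemma coe_asmul (a : A) (x : ↥(cSub S A M)) :
    ((a • x : ↥(cSub S A M)) : M) = cE S A a • (x : M) := rfl

end Corner

namespace Corner

variable {S A B : Type u} [Ring S] [Ring A] [Ring B] [Corner S A] [Corner S B]
variable {M N : Type u} [AddCommGroup M] [Module S M] [AddCommGroup N] [Module S N]

variable (S A) in
/-- Projection of a module element to the corner piece. -/
def toCorner (m : M) : ↥(cSub S A M) := ⟨cE S A 1 • m, e_smul_mem S A m⟩

lemma toCorner_smul (s : S) (m : M) :
    toCorner S A (s • m) = cP S A s • toCorner S A m := by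
  apply Subtype.ext
  show cE S A 1 • s • m = cE S A (cP S A s) • (cE S A 1 • m)
  rw [← mul_smul, ← mul_smul, ← cEPl (A := A) s, ε_mul_e]

lemma toCorner_add (m m' : M) :
    toCorner S A (m + m') = toCorner S A m + toCorner S A m' :=
  Subtype.ext (smul_add _ m m')

lemma toCorner_coe (x : ↥(cSub S A M)) : toCorner S A (x : M) = x :=
  Subtype.ext x.2

variable (S A) in
/-- Restriction of an `S`-linear map to corner pieces. -/
def restrict (g : M →ₗ[S] N) : ↥(cSub S A M) →ₗ[A] ↥(cSub S A N) where
  toFun x := ⟨g x, by show cE S A 1 • g (x : M) = g (x : M); rw [← map_smul, x.2]⟩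
  map_add' x y := Subtype.ext (by
    show g ((x : M) + (y : M)) = g (x : M) + g (y : M); rw [map_add])
  map_smul' a x := Subtype.ext (by
    show g (cE S A a • (x : M)) = cE S A a • g (x : M); rw [map_smul])

@[simp] lemma restrict_coe (g : M →ₗ[S] N) (x : ↥(cSub S A M)) :
    ((restrict S A g x : ↥(cSub S A N)) : N) = g (x : M) := rfl

/-- Gluing corner-wise linear maps to an `S`-linear map. -/
def glue (gA : ↥(cSub S A M) →ₗ[A] ↥(cSub S A N))
    (gB : ↥(cSub S B M) →ₗ[B] ↥(cSub S B N)) : M →ₗ[S] N where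
  toFun m := ↑(gA (toCorner S A m)) + ↑(gB (toCorner S B m))
  map_add' m m' := by
    rw [toCorner_add, toCorner_add, map_add, map_add]
    push_cast
    abel
  map_smul' s m := by
    rw [toCorner_smul (A := A), toCorner_smul (A := B), map_smul, map_smul,
      RingHom.id_apply]
    rw [coe_asmul, coe_asmul, ← smul_coe, ← smul_coe, smul_add]

lemma glue_apply (gA : ↥(cSub S A M) →ₗ[A] ↥(cSub S A N))
    (gB : ↥(cSub S B M) →ₗ[B] ↥(cSub S B N)) (m : M) :
    glue gA gB m = ↑(gA (toCorner S A m)) + ↑(gB (toCorner S B m)) := rfl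

variable (S A) in
/-- An `A`-module becomes an `S`-module via `π`. -/
def pushMod (K : Type u) [AddCommGroup K] [Module A K] : Module S K where
  smul s k := cP S A s • k
  one_smul k := by show cP S A 1 • k = k; rw [map_one, one_smul]
  mul_smul s t k := by show cP S A (s * t) • k = cP S A s • cP S A t • k
                       rw [map_mul, mul_smul]
  smul_zero s := by show cP S A s • (0 : K) = 0; rw [smul_zero]
  smul_add s k k' := by show cP S A s • (k + k') = cP S A s • k + cP S A s • k'
                        rw [smul_add]
  add_smul s t k := by show cP S A (s + t) • k = cP S A s • k + cP S A t • k
                       rw [map_add, add_smul]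
  zero_smul k := by show cP S A (0 : S) • k = 0; rw [map_zero, zero_smul]

end Corner

namespace Corner

variable {S A B : Type u} [Ring S] [Ring A] [Ring B] [Corner S A] [Corner S B]
variable {M N : Type u} [AddCommGroup M] [Module S M] [AddCommGroup N] [Module S N]

theorem modInj_corner (h : ModInj S M N) : ModInj A ↥(cSub S A M) ↥(cSub S A N) := by
  intro K₁ f₁
  -- the corresponding S-submodule of N
  set K : Submodule S N :=
    { carrier := {n | ∃ x : ↥(cSub S A N), x ∈ K₁ ∧ (x : N) = n}
      zero_mem' := ⟨0, K₁.zero_mem, rfl⟩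
      add_mem' := by
        rintro n n' ⟨x, hx, rfl⟩ ⟨y, hy, rfl⟩
        exact ⟨x + y, K₁.add_mem hx hy, rfl⟩
      smul_mem' := by
        rintro s n ⟨x, hx, rfl⟩
        exact ⟨cP S A s • x, K₁.smul_mem _ hx, by rw [coe_asmul, ← smul_coe]⟩ } with hK
  have hKsub : ∀ n ∈ K, cE S A 1 • n = n := by
    rintro n ⟨x, hx, rfl⟩; exact x.2
  have hmemK₁ : ∀ n, ∀ hn : n ∈ K, (⟨n, hKsub n hn⟩ : ↥(cSub S A N)) ∈ K₁ := by
    rintro n ⟨x, hx, rfl⟩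
    simpa using hx
  -- package an element of K as an element of K₁
  let ι : ↥K → ↥K₁ := fun k => ⟨⟨(k : N), hKsub _ k.2⟩, hmemK₁ _ k.2⟩
  have ι_add : ∀ k k' : ↥K, ι (k + k') = ι k + ι k' := fun k k' =>
    Subtype.ext (Subtype.ext rfl)
  have ι_smul : ∀ (s : S) (k : ↥K), ι (s • k) = cP S A s • ι k := fun s k =>
    Subtype.ext (Subtype.ext (smul_coe (⟨(k : N), hKsub _ k.2⟩ : ↥(cSub S A N)) s))
  let f : ↥K →ₗ[S] M :=
    { toFun := fun k => ↑(f₁ (ι k))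
      map_add' := fun k k' => by rw [ι_add, map_add]; rfl
      map_smul' := fun s k => by
        rw [ι_smul, map_smul, RingHom.id_apply, coe_asmul, ← smul_coe] }
  obtain ⟨g, hg⟩ := h K f
  refine ⟨restrict S A g, fun x => ?_⟩
  apply Subtype.ext
  show g ((x : ↥(cSub S A N)) : N) = ((f₁ x : ↥(cSub S A M)) : M)
  have hx : ((x : ↥(cSub S A N)) : N) ∈ K := ⟨↑x, x.2, rfl⟩
  have := hg ⟨_, hx⟩
  rw [this]
  show ((f₁ (ι ⟨_, hx⟩) : ↥(cSub S A M)) : M) = _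
  have hι : ι ⟨_, hx⟩ = x := Subtype.ext (Subtype.ext rfl)
  rw [hι]

theorem modProj_corner (h : ModProj S M N) : ModProj A ↥(cSub S A M) ↥(cSub S A N) := by
  intro K₀ _ _ g₁ hg₁ f₁
  letI : Module S K₀ := pushMod S A K₀
  have hsm : ∀ (s : S) (k : K₀), s • k = cP S A s • k := fun _ _ => rfl
  let g : N →ₗ[S] K₀ :=
    { toFun := fun n => g₁ (toCorner S A n)
      map_add' := fun n n' => by rw [toCorner_add, map_add]
      map_smul' := fun s n => by
        rw [toCorner_smul, map_smul, RingHom.id_apply, hsm] }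
  have hgs : Function.Surjective g := by
    intro k
    obtain ⟨x, hx⟩ := hg₁ k
    exact ⟨↑x, by show g₁ (toCorner S A ↑x) = k; rw [toCorner_coe, hx]⟩
  let f : M →ₗ[S] K₀ :=
    { toFun := fun m => f₁ (toCorner S A m)
      map_add' := fun m m' => by rw [toCorner_add, map_add]
      map_smul' := fun s m => by
        rw [toCorner_smul, map_smul, RingHom.id_apply, hsm] }
  obtain ⟨h', hh⟩ := h K₀ g hgs f
  refine ⟨restrict S A h', fun x => ?_⟩
  have h1 : toCorner S A (h' (x : M)) = restrict S A h' x := by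
    apply Subtype.ext
    show cE S A 1 • h' (x : M) = h' (x : M)
    rw [← map_smul, x.2]
  have h2 := hh (x : M)
  show g₁ (restrict S A h' x) = f₁ x
  rw [← h1]
  have : g (h' (x : M)) = f (x : M) := h2
  rw [show g (h' (x : M)) = g₁ (toCorner S A (h' (x : M))) from rfl] at this
  rw [this]
  show f₁ (toCorner S A ↑x) = f₁ x
  rw [toCorner_coe]

theorem modInj_glue (hsum : cE S A 1 + cE S B 1 = (1 : S))
    (hA : ModInj A ↥(cSub S A M) ↥(cSub S A N))
    (hB : ModInj B ↥(cSub S B M) ↥(cSub S B N)) : ModInj S M N := by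
  intro K f
  -- corner submodules of the corner pieces
  let KA : Submodule A ↥(cSub S A N) :=
    { carrier := {x | (x : N) ∈ K}
      zero_mem' := K.zero_mem
      add_mem' := fun hx hy => K.add_mem hx hy
      smul_mem' := fun a x hx => by
        show ((a • x : ↥(cSub S A N)) : N) ∈ K
        rw [coe_asmul]; exact K.smul_mem _ hx }
  let KB : Submodule B ↥(cSub S B N) :=
    { carrier := {x | (x : N) ∈ K}
      zero_mem' := K.zero_mem
      add_mem' := fun hx hy => K.add_mem hx hy
      smul_mem' := fun b x hx => by
        show ((b • x : ↥(cSub S B N)) : N) ∈ K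
        rw [coe_asmul]; exact K.smul_mem _ hx }
  let fA : ↥KA →ₗ[A] ↥(cSub S A M) :=
    { toFun := fun x => ⟨f ⟨((x : ↥(cSub S A N)) : N), x.2⟩, by
        show cE S A 1 • f _ = f _
        rw [← map_smul]
        congr 1
        exact Subtype.ext (x : ↥(cSub S A N)).2⟩
      map_add' := fun x y => Subtype.ext (by
        show f _ = f _ + f _
        rw [← map_add]
        congr 1)
      map_smul' := fun a x => Subtype.ext (by
        show f ⟨cE S A a • _, _⟩ = cE S A a • f _
        rw [show (⟨cE S A a • ((x : ↥(cSub S A N)) : N), _⟩ : ↥K)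
            = cE S A a • ⟨((x : ↥(cSub S A N)) : N), x.2⟩ from Subtype.ext rfl, map_smul]) }
  let fB : ↥KB →ₗ[B] ↥(cSub S B M) :=
    { toFun := fun x => ⟨f ⟨((x : ↥(cSub S B N)) : N), x.2⟩, by
        show cE S B 1 • f _ = f _
        rw [← map_smul]
        congr 1
        exact Subtype.ext (x : ↥(cSub S B N)).2⟩
      map_add' := fun x y => Subtype.ext (by
        show f _ = f _ + f _
        rw [← map_add]
        congr 1)
      map_smul' := fun b x => Subtype.ext (by
        show f ⟨cE S B b • _, _⟩ = cE S B b • f _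
        rw [show (⟨cE S B b • ((x : ↥(cSub S B N)) : N), _⟩ : ↥K)
            = cE S B b • ⟨((x : ↥(cSub S B N)) : N), x.2⟩ from Subtype.ext rfl, map_smul]) }
  obtain ⟨GA, hGA⟩ := hA KA fA
  obtain ⟨GB, hGB⟩ := hB KB fB
  refine ⟨glue GA GB, fun k => ?_⟩
  have mA : toCorner S A (k : N) ∈ KA := K.smul_mem _ k.2
  have mB : toCorner S B (k : N) ∈ KB := K.smul_mem _ k.2
  rw [glue_apply, hGA ⟨_, mA⟩, hGB ⟨_, mB⟩]
  show f ⟨cE S A 1 • (k : N), _⟩ + f ⟨cE S B 1 • (k : N), _⟩ = f k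
  rw [← map_add]
  congr 1
  apply Subtype.ext
  show cE S A 1 • (k : N) + cE S B 1 • (k : N) = (k : N)
  rw [← add_smul, hsum, one_smul]

theorem modProj_glue (hsum : cE S A 1 + cE S B 1 = (1 : S))
    (hA : ModProj A ↥(cSub S A M) ↥(cSub S A N))
    (hB : ModProj B ↥(cSub S B M) ↥(cSub S B N)) : ModProj S M N := by
  intro K _ _ g hgs f
  have surjA : Function.Surjective (restrict S A g (M := N) (N := K)) := by
    intro y
    obtain ⟨n, hn⟩ := hgs (y : K)
    refine ⟨toCorner S A n, Subtype.ext ?_⟩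
    show g (cE S A 1 • n) = (y : K)
    rw [map_smul, hn]
    exact y.2
  have surjB : Function.Surjective (restrict S B g (M := N) (N := K)) := by
    intro y
    obtain ⟨n, hn⟩ := hgs (y : K)
    refine ⟨toCorner S B n, Subtype.ext ?_⟩
    show g (cE S B 1 • n) = (y : K)
    rw [map_smul, hn]
    exact y.2
  obtain ⟨hA', hhA⟩ := hA ↥(cSub S A K) (restrict S A g) surjA (restrict S A f)
  obtain ⟨hB', hhB⟩ := hB ↥(cSub S B K) (restrict S B g) surjB (restrict S B f)
  refine ⟨glue hA' hB', fun m => ?_⟩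
  rw [glue_apply, map_add]
  have eA : g ↑(hA' (toCorner S A m)) = f ↑(toCorner S A m) := by
    have := hhA (toCorner S A m)
    have h2 : ((restrict S A g (hA' (toCorner S A m)) : ↥(cSub S A K)) : K)
        = ((restrict S A f (toCorner S A m) : ↥(cSub S A K)) : K) := by rw [this]
    simpa using h2
  have eB : g ↑(hB' (toCorner S B m)) = f ↑(toCorner S B m) := by
    have := hhB (toCorner S B m)
    have h2 : ((restrict S B g (hB' (toCorner S B m)) : ↥(cSub S B K)) : K)
        = ((restrict S B f (toCorner S B m) : ↥(cSub S B K)) : K) := by rw [this]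
    simpa using h2
  rw [eA, eB, ← map_add]
  congr 1
  show cE S A 1 • m + cE S B 1 • m = m
  rw [← add_smul, hsum, one_smul]

end Corner

open MulOpposite

section ProdInstances

variable (R₁ R₂ : Type u) [Ring R₁] [Ring R₂]

instance cornerLeft : Corner ((R₁ × R₂)ᵐᵒᵖ) (R₁ᵐᵒᵖ) where
  ε := { toFun := fun a => op (a.unop, 0)
         map_mul' := fun a b => by
           apply unop_injective
           simp [Prod.ext_iff]
         map_zero' := by simp
         map_add' := fun a b => by
           apply unop_injective
           simp [Prod.ext_iff] }
  π := { toFun := fun s => op s.unop.1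
         map_one' := rfl
         map_mul' := fun s t => by
           apply unop_injective
           simp
         map_zero' := rfl
         map_add' := fun s t => by
           apply unop_injective
           simp }
  πε := fun _ => rfl
  επl := fun s => by
    apply unop_injective
    show ((unop s).1, (0 : R₂)) = unop s * ((1 : R₁), (0 : R₂))
    apply Prod.ext <;> simp
  επr := fun s => by
    apply unop_injective
    show ((unop s).1, (0 : R₂)) = ((1 : R₁), (0 : R₂)) * unop s
    apply Prod.ext <;> simp

instance cornerRight : Corner ((R₁ × R₂)ᵐᵒᵖ) (R₂ᵐᵒᵖ) where
  ε := { toFun := fun a => op (0, a.unop)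
         map_mul' := fun a b => by
           apply unop_injective
           simp [Prod.ext_iff]
         map_zero' := by simp
         map_add' := fun a b => by
           apply unop_injective
           simp [Prod.ext_iff] }
  π := { toFun := fun s => op s.unop.2
         map_one' := rfl
         map_mul' := fun s t => by
           apply unop_injective
           simp
         map_zero' := rfl
         map_add' := fun s t => by
           apply unop_injective
           simp }
  πε := fun _ => rfl
  επl := fun s => by
    apply unop_injective
    show ((0 : R₁), (unop s).2) = unop s * ((0 : R₁), (1 : R₂))
    apply Prod.ext <;> simp
  επr := fun s => by
    apply unop_injective
    show ((0 : R₁), (unop s).2) = ((0 : R₁), (1 : R₂)) * unop s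
    apply Prod.ext <;> simp

lemma corner_sum :
    cE ((R₁ × R₂)ᵐᵒᵖ) (R₁ᵐᵒᵖ) 1 + cE ((R₁ × R₂)ᵐᵒᵖ) (R₂ᵐᵒᵖ) 1 = 1 := by
  apply unop_injective
  show ((1 : R₁), (0 : R₂)) + ((0 : R₁), (1 : R₂)) = ((1 : R₁), (1 : R₂))
  apply Prod.ext <;> simp

end ProdInstances

/-- the product of two right super QF rings is right super QF. -/
theorem stmt_16 (R₁ R₂ : Type u) [Ring R₁] [Ring R₂]
    (h₁ : RightSuperQF R₁) (h₂ : RightSuperQF R₂) : RightSuperQF (R₁ × R₂) := by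
  intro M N _ _ _ _
  constructor
  · intro h
    exact Corner.modProj_glue (corner_sum R₁ R₂)
      ((h₁ _ _).mp (Corner.modInj_corner h))
      ((h₂ _ _).mp (Corner.modInj_corner h))
  · intro h
    exact Corner.modInj_glue (corner_sum R₁ R₂)
      ((h₁ _ _).mpr (Corner.modProj_corner h))
      ((h₂ _ _).mpr (Corner.modProj_corner h))
end

section
/- Let R be a quasi-Frobenius ring. Then the following are equivalent: (1) every two-sided ideal of R contained in J(R) equals 0 or J(R); (2) J(R) is a homogeneous semisimple right R-module, i.e., J(R) is semisimple as a right R-module and all of its simple submodules are pairwise isomorphic. -/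
universe u

/-- `S` is quasi-Frobenius: right noetherian and injective as a right `S`-module. -/
def IsQF (S : Type u) [Ring S] : Prop :=
  IsNoetherianRing Sᵐᵒᵖ ∧
    ∀ (N : Type u) [AddCommGroup N] [Module Sᵐᵒᵖ N], ModInj Sᵐᵒᵖ Sᵐᵒᵖ N

namespace QFAux

open Submodule LinearMap

variable {A : Type u} [Ring A]

/-- Right multiplication by `a` as a left-linear map. -/
noncomputable abbrev rmul (a : A) : A →ₗ[A] A := LinearMap.toSpanSingleton A A a

lemma rmul_apply (a x : A) : rmul a x = x * a := by
  simp [LinearMap.toSpanSingleton_apply, smul_eq_mul]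

/-- Abbreviation for the Jacobson radical of the zero ideal. -/
noncomputable abbrev jrad (A : Type u) [Ring A] : Ideal A := Ideal.jacobson (⊥ : Ideal A)

lemma jrad_mul_mem {x : A} (hx : x ∈ jrad A) (y : A) : x * y ∈ jrad A :=
  Ideal.mul_mem_right y _ hx

lemma jrad_left_inv {x : A} (hx : x ∈ jrad A) : ∃ z : A, z * (1 - x) = 1 := by
  obtain ⟨z, hz⟩ := Ideal.mem_jacobson_iff.mp hx (-1)
  refine ⟨z, ?_⟩
  have h0 : z * -1 * x + z - 1 = 0 := by simpa using hz
  have : z * (1 - x) - 1 = z * -1 * x + z - 1 := by noncomm_ring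
  rw [h0] at this
  exact sub_eq_zero.mp this

/-- Essential (left) ideal. -/
def Ess (E : Ideal A) : Prop := ∀ K : Ideal A, K ≠ ⊥ → E ⊓ K ≠ ⊥

lemma Ess.mono {E E' : Ideal A} (h : E ≤ E') (hE : Ess E) : Ess E' := by
  intro K hK h'
  exact hE K hK (le_bot_iff.mp (le_trans (inf_le_inf_right K h) h'.le))

lemma Ess.comap_rmul {E : Ideal A} (hE : Ess E) (y : A) :
    Ess (Submodule.comap (rmul y) E) := by
  intro K hK
  by_cases hmap : Submodule.map (rmul y) K = ⊥
  · have hle : K ≤ Submodule.comap (rmul y) E := by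
      intro k hk
      have : rmul y k ∈ Submodule.map (rmul y) K := Submodule.mem_map_of_mem hk
      rw [hmap, Submodule.mem_bot] at this
      simp only [Submodule.mem_comap, this]
      exact E.zero_mem
    rw [inf_eq_right.mpr hle]
    exact hK
  · have h2 := hE _ hmap
    rw [Submodule.ne_bot_iff] at h2 ⊢
    obtain ⟨w, ⟨hwE, hwm⟩, hw0⟩ := h2
    obtain ⟨k, hk, rfl⟩ := hwm
    refine ⟨k, ⟨?_, hk⟩, ?_⟩
    · exact hwE
    · rintro rfl; exact hw0 (map_zero _)


/-- Extension property from self-injectivity: every linear map from a left ideal to `A`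
is given by right multiplication. -/
lemma exists_rmul_ext (hinj : ModInj A A A) (K : Ideal A) (f : K →ₗ[A] A) :
    ∃ c : A, ∀ x : K, f x = (x : A) * c := by
  obtain ⟨g, hg⟩ := hinj K f
  refine ⟨g 1, fun x => ?_⟩
  rw [← hg x]
  conv_lhs => rw [show (x : A) = (x : A) • (1 : A) by simp, map_smul]
  simp [smul_eq_mul]

lemma right_inv_of_ess (hinj : ModInj A A A) {a : A}
    (ha : Ess (LinearMap.ker (rmul a))) : ∃ c : A, (1 - a) * c = 1 := by
  set φ : A →ₗ[A] A := rmul (1 - a) with hφ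
  have hker : LinearMap.ker φ = ⊥ := by
    by_contra h
    obtain ⟨x, hxker, hx0⟩ := Submodule.exists_mem_ne_zero_of_ne_bot h
    have hxa : x * (1 - a) = 0 := by rw [← rmul_apply (1 - a) x]; exact hxker
    have hspan : Submodule.span A {x} ≠ ⊥ := by
      simp only [ne_eq, Submodule.span_singleton_eq_bot]; exact hx0
    obtain ⟨w, ⟨hwl, hwsp⟩, hw0⟩ :=
      Submodule.exists_mem_ne_zero_of_ne_bot (ha _ hspan)
    obtain ⟨c, rfl⟩ := Submodule.mem_span_singleton.mp hwsp
    have h1 : (c • x) * a = 0 := by rw [← rmul_apply a]; exact hwl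
    have h2 : (c • x) * (1 - a) = 0 := by
      rw [smul_eq_mul, mul_assoc, hxa, mul_zero]
    have : (c • x : A) = 0 := by
      have := h2
      rw [mul_sub, mul_one, h1, sub_zero] at this
      exact this
    exact hw0 this
  have hinjφ : Function.Injective φ := LinearMap.ker_eq_bot.mp hker
  -- inverse of φ on its range
  set e : A ≃ₗ[A] LinearMap.range φ := LinearEquiv.ofInjective φ hinjφ
  set f : (LinearMap.range φ : Ideal A) →ₗ[A] A := e.symm.toLinearMap
  obtain ⟨c, hc⟩ := exists_rmul_ext hinj (LinearMap.range φ) f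
  refine ⟨c, ?_⟩
  have h1 : f ⟨φ 1, LinearMap.mem_range_self φ 1⟩ = 1 := by
    have : (⟨φ 1, LinearMap.mem_range_self φ 1⟩ : LinearMap.range φ) = e 1 := rfl
    rw [this]; exact e.symm_apply_apply 1
  have h2 := hc ⟨φ 1, LinearMap.mem_range_self φ 1⟩
  rw [h1] at h2
  have hφ1 : φ 1 = 1 - a := by rw [hφ, rmul_apply, one_mul]
  rw [show ((⟨φ 1, LinearMap.mem_range_self φ 1⟩ : LinearMap.range φ) : A) = φ 1 from rfl,
    hφ1] at h2
  exact h2.symm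

lemma left_inv_of_ess (hinj : ModInj A A A) {a : A}
    (ha : Ess (LinearMap.ker (rmul a))) : ∃ z : A, z * (1 - a) = 1 := by
  obtain ⟨c, hc⟩ := right_inv_of_ess hinj ha
  have hgoalc : c = 1 - (-(a * c)) := by
    have h1 : c - a * c = 1 := by rw [← hc]; noncomm_ring
    rw [sub_neg_eq_add]
    exact sub_eq_iff_eq_add.mp h1
  have hess' : Ess (LinearMap.ker (rmul (-(a * c)))) := by
    refine Ess.mono ?_ ha
    intro x hx
    rw [LinearMap.mem_ker, rmul_apply] at hx ⊢
    rw [mul_neg, ← mul_assoc, hx, zero_mul, neg_zero]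
  obtain ⟨d, hd⟩ := right_inv_of_ess hinj hess'
  rw [← hgoalc] at hd
  have hda : d = 1 - a := by
    calc d = 1 * d := (one_mul d).symm
      _ = ((1 - a) * c) * d := by rw [hc]
      _ = (1 - a) * (c * d) := by rw [mul_assoc]
      _ = 1 - a := by rw [hd, mul_one]
  exact ⟨c, by rw [← hda]; exact hd⟩


lemma mem_jrad_of_ess (hinj : ModInj A A A) {d : A}
    (hd : Ess (LinearMap.ker (rmul d))) : d ∈ jrad A := by
  rw [Ideal.mem_jacobson_iff]
  intro y
  have hess : Ess (LinearMap.ker (rmul (-(y * d)))) := by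
    refine Ess.mono ?_ (hd.comap_rmul y)
    intro x hx
    rw [Submodule.mem_comap, LinearMap.mem_ker, rmul_apply, rmul_apply] at hx
    rw [LinearMap.mem_ker, rmul_apply]
    rw [mul_neg, ← mul_assoc, hx, neg_zero]
  obtain ⟨z, hz⟩ := left_inv_of_ess hinj hess
  refine ⟨z, ?_⟩
  rw [Ideal.mem_bot]
  have : z * (1 - -(y * d)) = z * (1 + y * d) := by noncomm_ring
  rw [this] at hz
  calc z * y * d + z - 1 = z * (1 + y * d) - 1 := by noncomm_ring
    _ = 0 := by rw [hz, sub_self]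

/-- Existence of a maximal complement of a left ideal. -/
lemma exists_max_disjoint (L : Ideal A) :
    ∃ C : Ideal A, C ⊓ L = ⊥ ∧ ∀ K : Ideal A, C ≤ K → K ⊓ L = ⊥ → K = C := by
  obtain ⟨C, hbot, hmax⟩ := zorn_le_nonempty₀ {C : Ideal A | C ⊓ L = ⊥}
    (fun c hcs hchain y hy => by
      refine ⟨sSup c, ?_, fun z hz => le_sSup hz⟩
      rw [Set.mem_setOf_eq, eq_bot_iff]
      intro x hx
      obtain ⟨hx1, hx2⟩ := hx
      obtain ⟨C', hC', hxC'⟩ := Submodule.mem_sSup_of_directed ⟨y, hy⟩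
        (hchain.directedOn) |>.mp hx1
      have := hcs hC'
      rw [Set.mem_setOf_eq] at this
      have : x ∈ C' ⊓ L := ⟨hxC', hx2⟩
      rwa [‹C' ⊓ L = ⊥›] at this)
    ⊥ (by simp)
  exact ⟨C, hmax.prop, fun K hCK hK => le_antisymm (hmax.le_of_ge hK hCK) hCK⟩

/-- Utumi: modulo the Jacobson radical, a self-injective ring is von Neumann regular. -/
lemma vnr_mod_jrad (hinj : ModInj A A A) (a : A) :
    ∃ b : A, a - a * b * a ∈ jrad A := by
  set L : Ideal A := LinearMap.ker (rmul a) with hL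
  obtain ⟨C, hCL, hCmax⟩ := exists_max_disjoint L
  set φC : C →ₗ[A] A := (rmul a).comp C.subtype with hφC
  have hinjC : Function.Injective φC := by
    rw [← LinearMap.ker_eq_bot]
    rw [eq_bot_iff]
    rintro ⟨x, hxC⟩ hx
    simp only [LinearMap.mem_ker, hφC, LinearMap.comp_apply, Submodule.subtype_apply] at hx
    have : x ∈ C ⊓ L := ⟨hxC, hx⟩
    rw [hCL] at this
    simpa using this
  set e : C ≃ₗ[A] LinearMap.range φC := LinearEquiv.ofInjective φC hinjC
  set f : (LinearMap.range φC : Ideal A) →ₗ[A] A := C.subtype.comp e.symm.toLinearMap with hf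
  obtain ⟨b, hb⟩ := exists_rmul_ext hinj (LinearMap.range φC) f
  have key : ∀ c ∈ C, c * a * b = c := by
    intro c hc
    have h1 : f ⟨φC ⟨c, hc⟩, LinearMap.mem_range_self φC ⟨c, hc⟩⟩ = c := by
      have : (⟨φC ⟨c, hc⟩, LinearMap.mem_range_self φC ⟨c, hc⟩⟩ :
          LinearMap.range φC) = e ⟨c, hc⟩ := rfl
      rw [hf, this]
      simp
    have h2 := hb ⟨φC ⟨c, hc⟩, LinearMap.mem_range_self φC ⟨c, hc⟩⟩
    rw [h1] at h2
    have h3 : φC ⟨c, hc⟩ = c * a := by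
      simp [hφC, rmul_apply]
    rw [show ((⟨φC ⟨c, hc⟩, LinearMap.mem_range_self φC ⟨c, hc⟩⟩ :
        LinearMap.range φC) : A) = φC ⟨c, hc⟩ from rfl, h3] at h2
    exact h2.symm
  refine ⟨b, ?_⟩
  set d := a - a * b * a with hd
  apply mem_jrad_of_ess hinj
  have hsub : L ⊔ C ≤ LinearMap.ker (rmul d) := by
    apply sup_le
    · intro x hx
      rw [hL, LinearMap.mem_ker, rmul_apply] at hx
      rw [LinearMap.mem_ker, rmul_apply, hd]
      calc x * (a - a * b * a) = x * a - ((x * a) * b) * a := by noncomm_ring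
        _ = 0 := by rw [hx, zero_mul, zero_mul, sub_self]
    · intro c hc
      rw [LinearMap.mem_ker, rmul_apply, hd]
      calc c * (a - a * b * a) = c * a - (c * a * b) * a := by noncomm_ring
        _ = c * a - c * a := by rw [key c hc]
        _ = 0 := sub_self _
  refine Ess.mono hsub ?_
  intro K hK hcon
  apply hK
  have hdisj : (C ⊔ K) ⊓ L = ⊥ := by
    rw [eq_bot_iff]
    rintro x ⟨hx1, hx2⟩
    obtain ⟨c, hc, k, hk, rfl⟩ := Submodule.mem_sup.mp hx1
    have hkmem : k ∈ (L ⊔ C) ⊓ K := by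
      constructor
      · have : (c + k) - c ∈ L ⊔ C := by
          exact Submodule.sub_mem _ (Submodule.mem_sup_left hx2)
            (Submodule.mem_sup_right hc)
        simpa using this
      · exact hk
    rw [hcon] at hkmem
    rw [Submodule.mem_bot] at hkmem
    subst hkmem
    have : c ∈ C ⊓ L := ⟨hc, by simpa using hx2⟩
    rw [hCL] at this
    simpa using this
  have hCK : C ⊔ K = C := hCmax _ le_sup_left hdisj
  have hKC : K ≤ C := by rw [← hCK]; exact le_sup_right
  rw [eq_bot_iff]
  intro x hx
  have : x ∈ (L ⊔ C) ⊓ K := ⟨Submodule.mem_sup_right (hKC hx), hx⟩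
  rw [hcon] at this
  exact this


/-- The ideal `J·J`. -/
noncomputable def sqJ (A : Type u) [Ring A] : Ideal A :=
  Submodule.span A {x : A | ∃ a ∈ jrad A, ∃ b ∈ jrad A, x = a * b}

lemma sqJ_le : sqJ A ≤ jrad A := by
  rw [sqJ, Submodule.span_le]
  rintro x ⟨a, ha, b, hb, rfl⟩
  exact Ideal.mul_mem_left _ a hb

lemma sqJ_twosided {x : A} (hx : x ∈ sqJ A) (r : A) : x * r ∈ sqJ A := by
  induction hx using Submodule.span_induction with
  | mem y hy =>
    obtain ⟨a, ha, b, hb, rfl⟩ := hy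
    rw [mul_assoc]
    exact Submodule.subset_span ⟨a, ha, b * r, jrad_mul_mem hb r, rfl⟩
  | zero => rw [zero_mul]; exact Submodule.zero_mem _
  | add y z _ _ hy hz => rw [add_mul]; exact Submodule.add_mem _ hy hz
  | smul c y _ hy => rw [smul_eq_mul, mul_assoc, ← smul_eq_mul]; exact Submodule.smul_mem _ c hy

/-- Nakayama: if `J ≤ J·J` then `J = 0`. -/
lemma jrad_eq_bot_of_le_sqJ [IsNoetherianRing A] (h : jrad A ≤ sqJ A) : jrad A = ⊥ := by
  obtain ⟨s, hs⟩ := IsNoetherian.noetherian (jrad A)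
  revert hs
  induction s using Finset.strongInduction with
  | _ s ih =>
    intro hs
    classical
    rcases Finset.eq_empty_or_nonempty s with rfl | ⟨a, has⟩
    · rw [← hs]; simp
    · -- every element of J lies in T = ⨆ i ∈ s, map (rmul i) J
      set T : Ideal A := ⨆ i ∈ (s : Set A), Submodule.map (rmul i) (jrad A) with hT
      have hJT : jrad A ≤ T := by
        refine le_trans h ?_
        rw [sqJ, Submodule.span_le]
        rintro x ⟨c, hc, b, hb, rfl⟩
        have hbs : b ∈ Submodule.span A (s : Set A) := by rw [hs]; exact hb
        clear hb
        induction hbs using Submodule.span_induction generalizing c with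
        | mem y hy =>
          exact le_biSup (fun i => Submodule.map (rmul i) (jrad A)) hy
            (Submodule.mem_map_of_mem hc)
        | zero => rw [mul_zero]; exact Submodule.zero_mem _
        | add y z _ _ hy hz =>
          rw [mul_add]; exact Submodule.add_mem _ (hy c hc) (hz c hc)
        | smul r y _ hy =>
          rw [smul_eq_mul, ← mul_assoc]
          exact hy (c * r) (jrad_mul_mem hc r)
      -- split off the summand at a
      have haJ : a ∈ jrad A := by
        rw [← hs]; exact Submodule.subset_span (by exact_mod_cast has)
      have haT : a ∈ T := hJT haJ
      have hsplit : T = Submodule.map (rmul a) (jrad A) ⊔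
          ⨆ i ∈ ((s.erase a : Finset A) : Set A), Submodule.map (rmul i) (jrad A) := by
        rw [hT]
        conv_lhs => rw [← Finset.insert_erase has, Finset.coe_insert]
        rw [iSup_insert]
      rw [hsplit] at haT
      obtain ⟨p, hp, q, hq, hpq⟩ := Submodule.mem_sup.mp haT
      obtain ⟨j, hjJ, rfl⟩ := hp
      set N' : Ideal A := Submodule.span A ((s.erase a : Finset A) : Set A) with hN'
      have hqN' : q ∈ N' := by
        revert hq
        refine fun hq => ?_
        have : (⨆ i ∈ ((s.erase a : Finset A) : Set A),
            Submodule.map (rmul i) (jrad A)) ≤ N' := by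
          refine iSup₂_le fun i hi => ?_
          rintro x ⟨y, _, rfl⟩
          rw [rmul_apply, ← smul_eq_mul]
          exact Submodule.smul_mem _ y
            (Submodule.subset_span (by exact_mod_cast hi))
        exact this hq
      obtain ⟨z, hz⟩ := jrad_left_inv hjJ
      have haq : a = z * q := by
        have h1 : (1 - j) * a = q := by
          rw [rmul_apply] at hpq
          have hq' : q = a - j * a := eq_sub_of_add_eq' hpq
          rw [hq']; noncomm_ring
        calc a = 1 * a := (one_mul a).symm
          _ = (z * (1 - j)) * a := by rw [hz]
          _ = z * ((1 - j) * a) := by rw [mul_assoc]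
          _ = z * q := by rw [h1]
      have haN' : a ∈ N' := by
        rw [haq, ← smul_eq_mul]
        exact Submodule.smul_mem _ z hqN'
      have hsN' : Submodule.span A (s : Set A) ≤ N' := by
        rw [Submodule.span_le]
        intro x hxs
        rcases eq_or_ne x a with rfl | hxa
        · exact haN'
        · exact Submodule.subset_span
            (by exact_mod_cast Finset.mem_erase.mpr ⟨hxa, by exact_mod_cast hxs⟩)
      have hN'J : N' = jrad A := by
        refine le_antisymm ?_ ?_
        · rw [hN', Submodule.span_le]
          intro x hx
          rw [← hs]
          exact Submodule.subset_span (Finset.erase_subset a s (by exact_mod_cast hx))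
        · rw [← hs]; exact hsN'
      exact ih (s.erase a) (Finset.erase_ssubset has) hN'J


lemma mkQ_mul (c x : A) : (jrad A).mkQ (c * x) = c • (jrad A).mkQ x := by
  rw [← smul_eq_mul, map_smul]

lemma mem_span_mkQ {x y c : A} (h : x - c * y ∈ jrad A) :
    (jrad A).mkQ x ∈ Submodule.span A {(jrad A).mkQ y} := by
  refine Submodule.mem_span_singleton.mpr ⟨c, ?_⟩
  rw [← mkQ_mul]
  exact ((Submodule.Quotient.eq _).mpr h).symm

lemma span_mkQ_eq {x y : A} (c d : A) (h1 : x - c * y ∈ jrad A) (h2 : y - d * x ∈ jrad A) :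
    Submodule.span A {(jrad A).mkQ x} = Submodule.span A {(jrad A).mkQ y} := by
  apply le_antisymm
  · rw [Submodule.span_le, Set.singleton_subset_iff]; exact mem_span_mkQ h1
  · rw [Submodule.span_le, Set.singleton_subset_iff]; exact mem_span_mkQ h2

lemma exists_idem_span [IsNoetherianRing A] (hinj : ModInj A A A) (s : Finset A) :
    ∃ e : A, e * e - e ∈ jrad A ∧
      Submodule.map (jrad A).mkQ (Submodule.span A (s : Set A)) =
        Submodule.span A {(jrad A).mkQ e} := by
  classical
  induction s using Finset.induction with
  | empty =>
    refine ⟨0, by simp, ?_⟩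
    simp
  | @insert a s hnotin ihs =>
    obtain ⟨e, he, hspan⟩ := ihs
    set c : A := a - a * e with hc
    obtain ⟨b, hb⟩ := vnr_mod_jrad hinj c
    set f : A := b * c with hf
    set g : A := e + f - e * f with hg
    have hfe : f * e ∈ jrad A := by
      have hce : c * e ∈ jrad A := by
        have : c * e = -(a * (e * e - e)) := by rw [hc]; noncomm_ring
        rw [this]
        exact Submodule.neg_mem _ (Ideal.mul_mem_left _ a he)
      have : f * e = b * (c * e) := by rw [hf]; noncomm_ring
      rw [this]
      exact Ideal.mul_mem_left _ b hce
    have hff : f * f - f ∈ jrad A := by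
      have : f * f - f = -(b * (c - c * b * c)) := by rw [hf]; noncomm_ring
      rw [this]
      exact Submodule.neg_mem _ (Ideal.mul_mem_left _ b hb)
    have heg : e * g - e ∈ jrad A := by
      have : e * g - e = (e * e - e) - (e * e - e) * f := by rw [hg]; noncomm_ring
      rw [this]
      exact Submodule.sub_mem _ he (jrad_mul_mem he f)
    have hfg : f * g - f ∈ jrad A := by
      have : f * g - f = f * e + (f * f - f) - (f * e) * f := by rw [hg]; noncomm_ring
      rw [this]
      exact Submodule.sub_mem _ (Submodule.add_mem _ hfe hff) (jrad_mul_mem hfe f)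
    have hgg : g * g - g ∈ jrad A := by
      have : g * g - g = (e * g - e) + (f * g - f) - e * (f * g - f) := by
        rw [hg]; noncomm_ring
      rw [this]
      exact Submodule.sub_mem _ (Submodule.add_mem _ heg hfg)
        (Ideal.mul_mem_left _ e hfg)
    refine ⟨g, hgg, ?_⟩
    rw [Finset.coe_insert, Submodule.span_insert, Submodule.map_sup, hspan]
    have hmapa : Submodule.map (jrad A).mkQ (Submodule.span A {a}) =
        Submodule.span A {(jrad A).mkQ a} := by
      rw [Submodule.map_span, Set.image_singleton]
    rw [hmapa]
    -- span {Q a} ⊔ span {Q e} = span {Q g}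
    have S1 : Submodule.span A {(jrad A).mkQ a} ⊔ Submodule.span A {(jrad A).mkQ e} =
        Submodule.span A {(jrad A).mkQ c} ⊔ Submodule.span A {(jrad A).mkQ e} := by
      apply le_antisymm
      · apply sup_le ?_ le_sup_right
        rw [Submodule.span_le, Set.singleton_subset_iff]
        have : (jrad A).mkQ a = (jrad A).mkQ c + a • (jrad A).mkQ e := by
          rw [← mkQ_mul, ← map_add, hc]; norm_num
        rw [this]
        exact Submodule.add_mem _
          (Submodule.mem_sup_left (Submodule.mem_span_singleton_self _))
          (Submodule.mem_sup_right (Submodule.smul_mem _ a (Submodule.mem_span_singleton_self _)))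
      · apply sup_le ?_ le_sup_right
        rw [Submodule.span_le, Set.singleton_subset_iff]
        have : (jrad A).mkQ c = (jrad A).mkQ a - a • (jrad A).mkQ e := by
          rw [← mkQ_mul, ← map_sub, hc]
        rw [this]
        exact Submodule.sub_mem _
          (Submodule.mem_sup_left (Submodule.mem_span_singleton_self _))
          (Submodule.mem_sup_right (Submodule.smul_mem _ a (Submodule.mem_span_singleton_self _)))
    have S2 : Submodule.span A {(jrad A).mkQ c} = Submodule.span A {(jrad A).mkQ f} := by
      refine span_mkQ_eq c b ?_ ?_
      · have : c - c * f = c - c * b * c := by rw [hf]; noncomm_ring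
        rw [this]; exact hb
      · have : f - b * c = 0 := by rw [hf]; noncomm_ring
        rw [this]; exact Submodule.zero_mem _
    have S3 : Submodule.span A {(jrad A).mkQ e} ⊔ Submodule.span A {(jrad A).mkQ f} =
        Submodule.span A {(jrad A).mkQ g} := by
      apply le_antisymm
      · apply sup_le
        · rw [Submodule.span_le, Set.singleton_subset_iff]
          refine mem_span_mkQ (c := e) ?_
          have : e - e * g = -(e * g - e) := by noncomm_ring
          rw [this]; exact Submodule.neg_mem _ heg
        · rw [Submodule.span_le, Set.singleton_subset_iff]
          refine mem_span_mkQ (c := f) ?_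
          have : f - f * g = -(f * g - f) := by noncomm_ring
          rw [this]; exact Submodule.neg_mem _ hfg
      · rw [Submodule.span_le, Set.singleton_subset_iff]
        have : (jrad A).mkQ g = (jrad A).mkQ e + (jrad A).mkQ f - e • (jrad A).mkQ f := by
          rw [← mkQ_mul, ← map_add, ← map_sub, hg]
        rw [this]
        exact Submodule.sub_mem _
          (Submodule.add_mem _
            (Submodule.mem_sup_left (Submodule.mem_span_singleton_self _))
            (Submodule.mem_sup_right (Submodule.mem_span_singleton_self _)))
          (Submodule.mem_sup_right (Submodule.smul_mem _ e (Submodule.mem_span_singleton_self _)))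
    rw [S1, S2, sup_comm, S3]


lemma quotient_complemented [IsNoetherianRing A] (hinj : ModInj A A A) :
    IsSemisimpleModule A (A ⧸ (jrad A : Ideal A)) := by
  rw [isSemisimpleModule_iff]
  constructor
  intro N
  obtain ⟨s, hs⟩ := IsNoetherian.noetherian (Submodule.comap (jrad A).mkQ N)
  have hN : Submodule.map (jrad A).mkQ (Submodule.span A (s : Set A)) = N := by
    rw [hs]
    exact Submodule.map_comap_eq_of_surjective ((jrad A).mkQ_surjective) N
  obtain ⟨e, he, hspan⟩ := exists_idem_span hinj s
  rw [hN] at hspan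
  refine ⟨Submodule.span A {(jrad A).mkQ (1 - e)}, ?_⟩
  -- right-multiplication by e on the quotient
  have hker : (jrad A : Ideal A) ≤ LinearMap.ker ((jrad A).mkQ ∘ₗ rmul e) := by
    intro y hy
    rw [LinearMap.mem_ker, LinearMap.comp_apply, rmul_apply, Submodule.mkQ_apply,
      Submodule.Quotient.mk_eq_zero]
    exact jrad_mul_mem hy e
  set ρ : (A ⧸ (jrad A : Ideal A)) →ₗ[A] (A ⧸ (jrad A : Ideal A)) :=
    Submodule.liftQ _ ((jrad A).mkQ ∘ₗ rmul e) hker with hρ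
  have hρ_apply : ∀ x : A, ρ ((jrad A).mkQ x) = (jrad A).mkQ (x * e) := by
    intro x
    rw [hρ]
    rw [show (jrad A).mkQ x = Submodule.Quotient.mk x from rfl]
    rw [Submodule.liftQ_apply, LinearMap.comp_apply, rmul_apply]
  rw [isCompl_iff]
  constructor
  · rw [disjoint_iff, eq_bot_iff]
    rintro x ⟨hx1, hx2⟩
    rw [Submodule.mem_bot]
    rw [hspan] at hx1
    obtain ⟨u, hu⟩ := Submodule.mem_span_singleton.mp hx1
    obtain ⟨v, hv⟩ := Submodule.mem_span_singleton.mp hx2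
    have h1 : ρ x = x := by
      rw [← hu, ← mkQ_mul, hρ_apply]
      rw [← sub_eq_zero, ← map_sub,
        show u * e * e - u * e = u * (e * e - e) by noncomm_ring,
        Submodule.mkQ_apply, Submodule.Quotient.mk_eq_zero]
      exact Ideal.mul_mem_left _ u he
    have h2 : ρ x = 0 := by
      rw [← hv, ← mkQ_mul, hρ_apply]
      rw [show v * (1 - e) * e = -(v * (e * e - e)) by noncomm_ring]
      rw [Submodule.mkQ_apply, Submodule.Quotient.mk_eq_zero]
      exact Submodule.neg_mem _ (Ideal.mul_mem_left _ v he)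
    rw [← h1, h2]
  · rw [codisjoint_iff, eq_top_iff]
    intro x _
    obtain ⟨y, rfl⟩ := (jrad A).mkQ_surjective x
    have : (jrad A).mkQ y = (jrad A).mkQ (y * e) + (jrad A).mkQ (y * (1 - e)) := by
      rw [← map_add]
      congr 1
      noncomm_ring
    rw [this]
    refine Submodule.add_mem _ ?_ ?_
    · refine Submodule.mem_sup_left ?_
      rw [hspan, mkQ_mul]
      exact Submodule.smul_mem _ y (Submodule.mem_span_singleton_self _)
    · refine Submodule.mem_sup_right ?_
      rw [mkQ_mul]
      exact Submodule.smul_mem _ y (Submodule.mem_span_singleton_self _)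


lemma jrad_semisimple [IsNoetherianRing A] (hinj : ModInj A A A)
    (hJJ : ∀ a ∈ jrad A, ∀ b ∈ jrad A, a * b = 0) :
    IsSemisimpleModule A (jrad A : Ideal A) := by
  haveI hq : IsSemisimpleModule A (A ⧸ (jrad A : Ideal A)) := quotient_complemented hinj
  have hcyc : ∀ a ∈ jrad A, IsSemisimpleModule A (Submodule.span A {a} : Ideal A) := by
    intro a ha
    set K : Ideal A := LinearMap.ker (rmul a) with hK
    have hJK : (jrad A : Ideal A) ≤ K := by
      intro y hy
      rw [hK, LinearMap.mem_ker, rmul_apply]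
      exact hJJ y hy a ha
    haveI : IsSemisimpleModule A ((A ⧸ (jrad A : Ideal A)) ⧸
        (Submodule.map (jrad A).mkQ K)) := inferInstance
    have e2 : ((A ⧸ (jrad A : Ideal A)) ⧸ (Submodule.map (jrad A).mkQ K)) ≃ₗ[A] A ⧸ K :=
      Submodule.quotientQuotientEquivQuotient _ _ hJK
    haveI : IsSemisimpleModule A (A ⧸ K) := IsSemisimpleModule.congr e2.symm
    have e1 : (Submodule.span A {a} : Ideal A) ≃ₗ[A] A ⧸ K :=
      (LinearEquiv.ofEq _ _
        (show (Submodule.span A {a} : Ideal A) = LinearMap.range (rmul a) from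
          LinearMap.span_singleton_eq_range A A a)) ≪≫ₗ
        (LinearMap.quotKerEquivRange (rmul a)).symm
    exact IsSemisimpleModule.congr e1
  have hsup : (⨆ a ∈ {x : A | x ∈ jrad A}, Submodule.span A {a}) = (jrad A : Ideal A) := by
    apply le_antisymm
    · refine iSup₂_le fun a ha => ?_
      rw [Submodule.span_le, Set.singleton_subset_iff]
      exact ha
    · intro x hx
      exact le_biSup (fun a => Submodule.span A {a}) hx
        (Submodule.mem_span_singleton_self x)
  have := isSemisimpleModule_biSup_of_isSemisimpleModule_submodule
    (s := {x : A | x ∈ jrad A}) (p := fun a => Submodule.span A {a})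
    (fun a ha => hcyc a ha)
  rwa [hsup] at this


lemma simple_ne_bot {M : Type u} [AddCommGroup M] [Module A M] {N : Submodule A M}
    (h : IsSimpleModule A N) : N ≠ ⊥ := by
  rintro rfl
  have hnt : Nontrivial (⊥ : Submodule A M) := IsSimpleModule.nontrivial A _
  have hsub : Subsingleton ((⊥ : Submodule A M) : Type u) := by
    constructor
    rintro ⟨x, hx⟩ ⟨y, hy⟩
    rw [Submodule.mem_bot] at hx hy
    simp [hx, hy]
  exact @false_of_nontrivial_of_subsingleton ↥(⊥ : Submodule A M) hnt hsub

lemma simple_isSemisimple {M : Type u} [AddCommGroup M] [Module A M]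
    (h : IsSimpleModule A M) : IsSemisimpleModule A M := by
  rw [isSemisimpleModule_iff]
  constructor
  intro a
  rcases eq_bot_or_eq_top a with rfl | rfl
  · exact ⟨⊤, isCompl_bot_top⟩
  · exact ⟨⊥, isCompl_top_bot⟩

/-- Direction (2) → (1). -/
lemma dir21 (hinj : ModInj A A A)
    (hss : IsSemisimpleModule A (jrad A : Ideal A))
    (hiso : ∀ S T : Submodule A (jrad A : Ideal A), IsSimpleModule A S →
      IsSimpleModule A T → Nonempty (S ≃ₗ[A] T))
    (I : Ideal A) (htwo : ∀ x ∈ I, ∀ r : A, x * r ∈ I) (hle : I ≤ jrad A) :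
    I = ⊥ ∨ I = jrad A := by
  by_cases hI : I = ⊥
  · exact Or.inl hI
  right
  haveI := hss
  set ι : (jrad A : Ideal A) →ₗ[A] A := (jrad A).subtype with hι
  have hinjι : Function.Injective ι := Submodule.injective_subtype _
  set I' : Submodule A (jrad A : Ideal A) := Submodule.comap ι I with hI'def
  have hmapI' : Submodule.map ι I' = I := by
    rw [hI'def, hι, Submodule.map_comap_subtype, inf_eq_right.mpr hle]
  have hI' : I' ≠ ⊥ := by
    intro h
    apply hI
    rw [← hmapI', h, Submodule.map_bot]
  obtain ⟨S0, hS0le, hS0⟩ :=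
    (IsSemisimpleModule.eq_bot_or_exists_simple_le I').resolve_left hI'
  have hsimple_le : ∀ T : Submodule A (jrad A : Ideal A), IsSimpleModule A T → T ≤ I' := by
    intro T hT
    obtain ⟨φ0⟩ := hiso S0 T hS0 hT
    set φ' : (Submodule.map ι S0 : Ideal A) ≃ₗ[A] (Submodule.map ι T : Ideal A) :=
      (Submodule.equivMapOfInjective ι hinjι S0).symm ≪≫ₗ φ0 ≪≫ₗ
        (Submodule.equivMapOfInjective ι hinjι T) with hφ'
    set f : (Submodule.map ι S0 : Ideal A) →ₗ[A] A :=
      (Submodule.map ι T).subtype ∘ₗ φ'.toLinearMap with hfdef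
    obtain ⟨c, hc⟩ := exists_rmul_ext hinj _ f
    intro x hxT
    have hmem : ι x ∈ Submodule.map ι T := Submodule.mem_map_of_mem hxT
    obtain ⟨u, hu⟩ := φ'.surjective ⟨ι x, hmem⟩
    have h1 : f u = ι x := by rw [hfdef]; simp [hu]
    have h2 : f u = (u : A) * c := hc u
    have humem : (u : A) ∈ I := by
      have : (u : A) ∈ Submodule.map ι S0 := u.2
      have hmaple : Submodule.map ι S0 ≤ I := by
        rw [← hmapI']
        exact Submodule.map_mono hS0le
      exact hmaple this
    have : ι x ∈ I := by
      rw [← h1, h2]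
      exact htwo _ humem c
    exact this
  have htop : (⊤ : Submodule A (jrad A : Ideal A)) ≤ I' := by
    rw [← IsSemisimpleModule.sSup_simples_eq_top A (jrad A : Ideal A)]
    exact sSup_le fun m hm => hsimple_le m hm
  have hIT : I' = ⊤ := top_unique htop
  rw [← hmapI', hIT, Submodule.map_top, hι, Submodule.range_subtype]


/-- Direction (1) → homogeneity. -/
lemma homog [IsNoetherianRing A] (hinj : ModInj A A A)
    (h1 : ∀ I : Ideal A, (∀ x ∈ I, ∀ r : A, x * r ∈ I) → I ≤ jrad A → I = ⊥ ∨ I = jrad A)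
    (S T : Submodule A (jrad A : Ideal A))
    (hS : IsSimpleModule A S) (hT : IsSimpleModule A T) :
    Nonempty (S ≃ₗ[A] T) := by
  classical
  set ι : (jrad A : Ideal A) →ₗ[A] A := (jrad A).subtype with hι
  have hinjι : Function.Injective ι := Submodule.injective_subtype _
  set S' : Ideal A := Submodule.map ι S with hS'
  set T' : Ideal A := Submodule.map ι T with hT'
  have eqS : S ≃ₗ[A] S' := Submodule.equivMapOfInjective ι hinjι S
  have eqT : T ≃ₗ[A] T' := Submodule.equivMapOfInjective ι hinjι T
  haveI hS'simple : IsSimpleModule A S' := IsSimpleModule.congr eqS.symm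
  haveI hT'simple : IsSimpleModule A T' := IsSimpleModule.congr eqT.symm
  have hS'le : S' ≤ jrad A := Submodule.map_subtype_le _ _
  have hT'le : T' ≤ jrad A := Submodule.map_subtype_le _ _
  set K : A → Ideal A := fun a => Submodule.map (rmul a) S' with hK
  set H : Ideal A := ⨆ a : A, K a with hH
  have hKle : ∀ a, K a ≤ jrad A := by
    intro a
    rintro x ⟨y, hy, rfl⟩
    have : rmul a y = y * a := rmul_apply a y
    rw [this]
    exact jrad_mul_mem (hS'le hy) a
  have hHle : H ≤ jrad A := iSup_le hKle
  have hcomp : ∀ a r : A, (rmul r) ∘ₗ (rmul a) = rmul (a * r) := by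
    intro a r
    ext x
    simp only [LinearMap.comp_apply]
    rw [rmul_apply, rmul_apply, rmul_apply, mul_assoc]
  have hHtwo : ∀ x ∈ H, ∀ r : A, x * r ∈ H := by
    intro x hx r
    have hmap : Submodule.map (rmul r) H ≤ H := by
      rw [hH, Submodule.map_iSup]
      refine iSup_le fun a => ?_
      rw [hK]
      rw [← Submodule.map_comp, hcomp]
      exact le_iSup (fun b => Submodule.map (rmul b) S') (a * r)
    have hxr : x * r = rmul r x := (rmul_apply r x).symm
    rw [hxr]
    exact hmap (Submodule.mem_map_of_mem hx)
  have hS'H : S' ≤ H := by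
    have h1' : rmul (1 : A) = LinearMap.id := by
      ext x; rw [rmul_apply, mul_one]; rfl
    have hK1 : K 1 = S' := by
      show Submodule.map (rmul 1) S' = S'
      rw [h1']
      exact Submodule.map_id S'
    rw [← hK1]
    exact le_iSup K 1
  have hHbot : H ≠ ⊥ := by
    intro h
    exact simple_ne_bot hS'simple (le_bot_iff.mp (h ▸ hS'H))
  have hHJ : H = jrad A := (h1 H hHtwo hHle).resolve_left hHbot
  have hT'H : T' ≤ H := hHJ ▸ hT'le
  obtain ⟨t, htT', ht0⟩ := Submodule.exists_mem_ne_zero_of_ne_bot (simple_ne_bot hT'simple)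
  have htH : t ∈ H := hT'H htT'
  obtain ⟨sfin, hsfin⟩ :=
    CompleteLattice.IsCompactElement.exists_finset_of_le_iSup _ (Submodule.singleton_span_isCompactElement t) K
      (by rwa [Submodule.span_singleton_le_iff_mem])
  set W : Ideal A := ⨆ a ∈ sfin, K a with hW
  have htW : t ∈ W := hsfin (Submodule.mem_span_singleton_self t)
  have hKW : ∀ a ∈ sfin, K a ≤ W := fun a ha => le_biSup K ha
  have hT'W : T' ≤ W := by
    set N : Submodule A T' := Submodule.comap T'.subtype W with hN
    have hNne : N ≠ ⊥ := by
      intro h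
      have hmem : (⟨t, htT'⟩ : T') ∈ N := htW
      rw [h, Submodule.mem_bot] at hmem
      exact ht0 (congrArg Subtype.val hmem)
    have hNtop : N = ⊤ := (eq_bot_or_eq_top N).resolve_left hNne
    intro x hx
    have hxN : (⟨x, hx⟩ : T') ∈ N := by rw [hNtop]; exact Submodule.mem_top
    exact hxN
  have hKss : ∀ a : A, IsSemisimpleModule A (K a) := by
    intro a
    haveI : IsSemisimpleModule A S' := simple_isSemisimple hS'simple
    have hra : K a = LinearMap.range ((rmul a) ∘ₗ S'.subtype) := by
      rw [hK, LinearMap.range_comp, Submodule.range_subtype]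
    rw [hra]
    exact IsSemisimpleModule.range _
  haveI hWss : IsSemisimpleModule A W := by
    have h0 := isSemisimpleModule_biSup_of_isSemisimpleModule_submodule
      (s := ((sfin : Finset A) : Set A)) (p := K) (fun a _ => hKss a)
    have heq : (⨆ a ∈ ((sfin : Finset A) : Set A), K a) = W := by
      rw [hW]
      simp only [Finset.mem_coe]
    rw [heq] at h0
    exact h0
  have hT'rng : T' ≤ LinearMap.range W.subtype := by
    rw [Submodule.range_subtype]; exact hT'W
  set Tw : Submodule A W := Submodule.comap W.subtype T' with hTw
  have eTw : Tw ≃ₗ[A] T' :=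
    Submodule.comap_equiv_self_of_inj_of_le (Submodule.injective_subtype W) hT'rng
  haveI hTwsimple : IsSimpleModule A Tw := IsSimpleModule.congr eTw
  obtain ⟨C, hC⟩ := exists_isCompl Tw
  set π : W →ₗ[A] Tw := Submodule.linearProjOfIsCompl Tw C hC with hπ
  have hkey : ∃ a ∈ sfin, ∃ w : W, (w : A) ∈ K a ∧ π w ≠ 0 := by
    by_contra hcon
    push_neg at hcon
    have hker : ∀ a ∈ sfin, Submodule.comap W.subtype (K a) ≤ LinearMap.ker π := by
      intro a ha w hw
      rw [LinearMap.mem_ker]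
      exact hcon a ha w hw
    have hmapKa : ∀ a ∈ sfin,
        Submodule.map W.subtype (Submodule.comap W.subtype (K a)) = K a := by
      intro a ha
      rw [Submodule.map_comap_eq, Submodule.range_subtype, inf_eq_right]
      exact hKW a ha
    have htopW : (⨆ a ∈ sfin, Submodule.comap W.subtype (K a)) = ⊤ := by
      apply Submodule.map_injective_of_injective (Submodule.injective_subtype W)
      rw [Submodule.map_top, Submodule.range_subtype]
      calc Submodule.map W.subtype (⨆ a ∈ sfin, Submodule.comap W.subtype (K a))
          = ⨆ a ∈ sfin, Submodule.map W.subtype (Submodule.comap W.subtype (K a)) := by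
            simp_rw [Submodule.map_iSup]
        _ = ⨆ a ∈ sfin, K a := biSup_congr hmapKa
        _ = W := hW.symm
    have hπ0 : π ⟨t, hT'W htT'⟩ = 0 := by
      have hmem : (⟨t, hT'W htT'⟩ : W) ∈ LinearMap.ker π := by
        have hle' : (⊤ : Submodule A W) ≤ LinearMap.ker π := by
          rw [← htopW]
          exact iSup₂_le hker
        exact hle' Submodule.mem_top
      exact LinearMap.mem_ker.mp hmem
    have hmemTw : (⟨t, hT'W htT'⟩ : W) ∈ Tw := htT'
    have happly : π ⟨t, hT'W htT'⟩ = ⟨⟨t, hT'W htT'⟩, hmemTw⟩ :=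
      Submodule.linearProjOfIsCompl_apply_left hC ⟨⟨t, hT'W htT'⟩, hmemTw⟩
    rw [hπ0] at happly
    have : t = (0 : A) := by
      have h2 := congrArg Subtype.val happly.symm
      exact congrArg Subtype.val h2
    exact ht0 this
  obtain ⟨a, hasfin, w, hwK, hπw⟩ := hkey
  set Kw : Submodule A W := Submodule.comap W.subtype (K a) with hKw
  set ψ : Kw →ₗ[A] Tw := π ∘ₗ Kw.subtype with hψ
  have hψne : ψ ≠ 0 := by
    intro h
    apply hπw
    have : ψ ⟨w, hwK⟩ = π w := rfl
    rw [h] at this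
    rw [← this]
    rfl
  have hKane : K a ≠ ⊥ := by
    intro h
    apply hπw
    have hw0 : (w : A) = 0 := by rw [h, Submodule.mem_bot] at hwK; exact hwK
    have : w = 0 := Subtype.ext hw0
    rw [this, map_zero]
  set φ : S' →ₗ[A] A := (rmul a) ∘ₗ S'.subtype with hφ
  have hrange : LinearMap.range φ = K a := by
    rw [hφ, LinearMap.range_comp, Submodule.range_subtype]
  have hφinj : Function.Injective φ := by
    rw [← LinearMap.ker_eq_bot]
    rcases eq_bot_or_eq_top (LinearMap.ker φ) with h | h
    · exact h
    · exfalso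
      apply hKane
      rw [← hrange, LinearMap.ker_eq_top.mp h, LinearMap.range_zero]
  set eSK : S' ≃ₗ[A] (K a) :=
    (LinearEquiv.ofInjective φ hφinj) ≪≫ₗ LinearEquiv.ofEq _ _ hrange with heSK
  set eKw : Kw ≃ₗ[A] (K a) :=
    Submodule.comap_equiv_self_of_inj_of_le (Submodule.injective_subtype W)
      (by rw [Submodule.range_subtype]; exact hKW a hasfin) with heKw
  set χ : S' →ₗ[A] Tw := ψ ∘ₗ (eKw.symm.toLinearMap ∘ₗ eSK.toLinearMap) with hχ
  have hχne : χ ≠ 0 := by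
    intro h
    apply hψne
    ext u
    have h2 : χ (eSK.symm (eKw u)) = ψ u := by
      rw [hχ]
      simp only [LinearMap.comp_apply, LinearEquiv.coe_coe, LinearEquiv.apply_symm_apply,
        LinearEquiv.symm_apply_apply]
    rw [h, LinearMap.zero_apply] at h2
    rw [LinearMap.zero_apply, ← h2]
  have hbij := LinearMap.bijective_of_ne_zero hχne
  exact ⟨eqS ≪≫ₗ LinearEquiv.ofBijective χ hbij ≪≫ₗ eTw ≪≫ₗ eqT.symm⟩

end QFAux

theorem stmt_19 (R : Type u) [Ring R] (hqf : IsQF R) :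
    (∀ I : Ideal Rᵐᵒᵖ, IsTwoSidedRI R I → I ≤ (⊥ : Ideal Rᵐᵒᵖ).jacobson →
      I = ⊥ ∨ I = (⊥ : Ideal Rᵐᵒᵖ).jacobson) ↔
    (IsSemisimpleModule Rᵐᵒᵖ ((⊥ : Ideal Rᵐᵒᵖ).jacobson) ∧
      ∀ S T : Submodule Rᵐᵒᵖ ((⊥ : Ideal Rᵐᵒᵖ).jacobson),
        IsSimpleModule Rᵐᵒᵖ S → IsSimpleModule Rᵐᵒᵖ T →
          Nonempty (S ≃ₗ[Rᵐᵒᵖ] T)) := by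
  obtain ⟨hnoeth, hinjN⟩ := hqf
  haveI := hnoeth
  have hinj : ModInj Rᵐᵒᵖ Rᵐᵒᵖ Rᵐᵒᵖ := hinjN Rᵐᵒᵖ
  constructor
  · intro h
    have h1 : ∀ I : Ideal Rᵐᵒᵖ, (∀ x ∈ I, ∀ r : Rᵐᵒᵖ, x * r ∈ I) →
        I ≤ QFAux.jrad Rᵐᵒᵖ → I = ⊥ ∨ I = QFAux.jrad Rᵐᵒᵖ := fun I htwo hle =>
      h I (fun x hx r => htwo x hx (MulOpposite.op r)) hle
    have hJJ : ∀ a ∈ QFAux.jrad Rᵐᵒᵖ, ∀ b ∈ QFAux.jrad Rᵐᵒᵖ, a * b = 0 := by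
      rcases h1 (QFAux.sqJ Rᵐᵒᵖ) (fun x hx r => QFAux.sqJ_twosided hx r)
          QFAux.sqJ_le with hc | hc
      · intro a ha b hb
        have hmem : a * b ∈ QFAux.sqJ Rᵐᵒᵖ := Submodule.subset_span ⟨a, ha, b, hb, rfl⟩
        rw [hc, Submodule.mem_bot] at hmem
        exact hmem
      · have hbot : QFAux.jrad Rᵐᵒᵖ = ⊥ := QFAux.jrad_eq_bot_of_le_sqJ (le_of_eq hc.symm)
        intro a ha b hb
        rw [hbot, Submodule.mem_bot] at ha
        rw [ha, zero_mul]
    exact ⟨QFAux.jrad_semisimple hinj hJJ, fun S T hS hT => QFAux.homog hinj h1 S T hS hT⟩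
  · rintro ⟨hss, hiso⟩ I htwoI hle
    refine QFAux.dir21 hinj hss hiso I (fun x hx r => ?_) hle
    rw [← MulOpposite.op_unop r]
    exact htwoI x hx r.unop
end
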